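/- arXiv:2312.11287 — 3 statements merged into one kernel-verified Lean document; each statement's English description precedes it below -/
import Mathlib

section
/- Let G be a connected bipartite graph on vertex set V and let e be an edge of G such that the graph G − e obtained from G by deleting e is connected. Then N(P_G) ≤ N(P_{G−e}). -/
open Finset
set_option linter.unusedSectionVars false

/-- The symmetric edge polytope of a finite simple graph `G`: the convex hull of the
vectors `e_i - e_j` for all adjacent pairs `i, j`. -/
def symEdgePolytope {V : Type*} [DecidableEq V] (G : SimpleGraph V) : Set (V → ℝ) :=
  convexHull ℝ {x : V → ℝ | ∃ i j : V, G.Adj i j ∧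
    x = fun k => (if k = i then (1 : ℝ) else 0) - (if k = j then (1 : ℝ) else 0)}

/-- A facet of a polytope `P`: a maximal proper (exposed) face of `P`. -/
def IsFacet {V : Type*} (P F : Set (V → ℝ)) : Prop :=
  IsExposed ℝ P F ∧ F ≠ P ∧
    ∀ F' : Set (V → ℝ), IsExposed ℝ P F' → F' ≠ P → F ⊆ F' → F' = F

/-- `N(P)`: the number of facets of a polytope `P`. -/
noncomputable def numFacets {V : Type*} (P : Set (V → ℝ)) : ℕ :=
  Set.ncard {F : Set (V → ℝ) | IsFacet P F}

section Aux

variable {V : Type*} [Fintype V] [DecidableEq V]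

/-- The generator vector `e_i - e_j`. -/
def gvec (i j : V) : V → ℝ := fun k => (if k = i then (1 : ℝ) else 0) - (if k = j then (1 : ℝ) else 0)

/-- The set of generators of the symmetric edge polytope. -/
def gens (H : SimpleGraph V) : Set (V → ℝ) := {x | ∃ i j : V, H.Adj i j ∧ x = gvec i j}

lemma symEdgePolytope_eq (H : SimpleGraph V) : symEdgePolytope H = convexHull ℝ (gens H) := rfl

/-- The linear functional `x ↦ ∑ v, y v * x v`. -/
noncomputable def lfun (y : V → ℝ) : (V → ℝ) →L[ℝ] ℝ :=
  LinearMap.toContinuousLinearMap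
    { toFun := fun x => ∑ v, y v * x v
      map_add' := fun a b => by
        simp [Pi.add_apply, mul_add, Finset.sum_add_distrib]
      map_smul' := fun c a => by
        simp only [Pi.smul_apply, smul_eq_mul, RingHom.id_apply, Finset.mul_sum]
        exact Finset.sum_congr rfl fun v _ => by ring }

lemma lfun_apply (y x : V → ℝ) : lfun y x = ∑ v, y v * x v := rfl

lemma gvec_eq_single (i j : V) : gvec i j = Pi.single i 1 - Pi.single j 1 := by
  funext k
  simp [gvec, Pi.single_apply]

lemma lfun_gvec (y : V → ℝ) (i j : V) : lfun y (gvec i j) = y i - y j := by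
  rw [lfun_apply]
  simp only [gvec, mul_sub, mul_ite, mul_one, mul_zero, Finset.sum_sub_distrib,
    Finset.sum_ite_eq', Finset.mem_univ, if_true]

lemma gvec_neg (i j : V) : gvec j i = -gvec i j := by
  funext k; simp [gvec]

end Aux

section Aux2

set_option linter.unusedSectionVars false

variable {V : Type*} [Fintype V] [DecidableEq V] {H : SimpleGraph V}

/-- `y` takes a unit step across every edge. -/
def UnitStep (H : SimpleGraph V) (y : V → ℝ) : Prop :=
  ∀ ⦃i j : V⦄, H.Adj i j → y i - y j = 1 ∨ y i - y j = -1

/-- `y` is 1-Lipschitz across edges. -/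
def SubUnit (H : SimpleGraph V) (y : V → ℝ) : Prop :=
  ∀ ⦃i j : V⦄, H.Adj i j → y i - y j ≤ 1

lemma UnitStep.subUnit {y : V → ℝ} (h : UnitStep H y) : SubUnit H y := by
  intro i j hij
  rcases h hij with h' | h' <;> linarith

/-- The face of the symmetric edge polytope cut out by `⟨y, ·⟩ = 1`. -/
def faceOf (H : SimpleGraph V) (y : V → ℝ) : Set (V → ℝ) :=
  {x ∈ symEdgePolytope H | lfun y x = 1}

lemma gens_subset_polytope : gens H ⊆ symEdgePolytope H := subset_convexHull ℝ _

lemma neg_mem_gens {x : V → ℝ} (hx : x ∈ gens H) : -x ∈ gens H := by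
  obtain ⟨i, j, hij, rfl⟩ := hx
  exact ⟨j, i, hij.symm, (gvec_neg i j).symm ▸ rfl⟩

lemma gens_finite : (gens H).Finite := by
  apply Set.Finite.subset (Set.finite_range (fun p : V × V => gvec p.1 p.2))
  rintro x ⟨i, j, _, rfl⟩
  exact ⟨(i, j), rfl⟩

lemma gens_mono {H' : SimpleGraph V} (h : H ≤ H') : gens H ⊆ gens H' := by
  rintro x ⟨i, j, hij, rfl⟩
  exact ⟨i, j, h hij, rfl⟩

lemma le_one_on {y : V → ℝ} (hsub : SubUnit H y) :
    ∀ x ∈ symEdgePolytope H, lfun y x ≤ 1 := by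
  intro x hx
  have h1 : convexHull ℝ (gens H) ⊆ {w | lfun y w ≤ 1} := by
    apply convexHull_min ?_ (convex_halfSpace_le ⟨fun a b => map_add _ a b,
      fun c a => map_smul _ c a⟩ 1)
    rintro g ⟨i, j, hij, rfl⟩
    show lfun y (gvec i j) ≤ 1
    rw [lfun_gvec]
    exact hsub hij
  exact h1 ((symEdgePolytope_eq H) ▸ hx)

lemma agree_on {l₁ l₂ : (V → ℝ) →L[ℝ] ℝ} (hg : ∀ g ∈ gens H, l₁ g = l₂ g)
    {x : V → ℝ} (hx : x ∈ symEdgePolytope H) : l₁ x = l₂ x := by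
  have h1 : convexHull ℝ (gens H) ⊆ {w | l₁ w - l₂ w = 0} := by
    apply convexHull_min ?_ (convex_hyperplane ⟨fun a b => by simp only [map_add]; ring,
      fun c a => by simp only [map_smul, smul_eq_mul]; ring⟩ 0)
    intro g hgg
    simpa [sub_eq_zero] using hg g hgg
  exact sub_eq_zero.mp (h1 ((symEdgePolytope_eq H) ▸ hx))

/-- Equality case: a point of the hull where a functional bounded by 1 attains 1 lies
in the hull of the tight generators. -/
lemma mem_hull_tight {S : Set (V → ℝ)} {l : (V → ℝ) →L[ℝ] ℝ}
    (hle : ∀ s ∈ S, l s ≤ 1) {x : V → ℝ} (hx : x ∈ convexHull ℝ S) (hlx : l x = 1) :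
    x ∈ convexHull ℝ {s | s ∈ S ∧ l s = 1} := by
  rw [_root_.convexHull_eq] at hx
  obtain ⟨ι, t, w, z, hw0, hw1, hzS, hcm⟩ := hx
  have hx_eq : x = ∑ i ∈ t, w i • z i := by
    rw [← hcm, Finset.centerMass_eq_of_sum_1 _ _ hw1]
  have hsum : ∑ i ∈ t, w i * l (z i) = 1 := by
    have : l x = ∑ i ∈ t, w i * l (z i) := by
      rw [hx_eq, map_sum]
      exact Finset.sum_congr rfl fun i _ => by rw [map_smul, smul_eq_mul]
    rw [← this, hlx]
  have key : ∀ i ∈ t, w i * (1 - l (z i)) = 0 := by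
    rw [← Finset.sum_eq_zero_iff_of_nonneg
      (fun i hi => mul_nonneg (hw0 i hi) (sub_nonneg.mpr (hle _ (hzS i hi))))]
    have : ∑ i ∈ t, w i * (1 - l (z i)) = (∑ i ∈ t, w i) - ∑ i ∈ t, w i * l (z i) := by
      rw [← Finset.sum_sub_distrib]
      exact Finset.sum_congr rfl fun i _ => by ring
    rw [this, hw1, hsum, sub_self]
  have hcm' : ({i ∈ t | w i ≠ 0} : Finset ι).centerMass w z = x := by
    rw [Finset.centerMass_filter_ne_zero]; exact hcm
  rw [← hcm']
  apply Finset.centerMass_mem_convexHull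
  · intro i hi; exact hw0 i (Finset.mem_filter.mp hi).1
  · have : ∑ i ∈ {i ∈ t | w i ≠ 0}, w i = ∑ i ∈ t, w i := Finset.sum_filter_ne_zero t
    rw [this, hw1]; norm_num
  · intro i hi
    obtain ⟨hit, hwi⟩ := Finset.mem_filter.mp hi
    refine ⟨hzS i hit, ?_⟩
    have := key i hit
    rcases mul_eq_zero.mp this with h | h
    · exact absurd h hwi
    · linarith [sub_eq_zero.mp h]

end Aux2
section Aux3

set_option linter.unusedSectionVars false

variable {V : Type*} [Fintype V] [DecidableEq V] {H : SimpleGraph V} {y : V → ℝ}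

lemma exists_tight (hy : UnitStep H y) (hedge : ∃ i j : V, H.Adj i j) :
    ∃ g ∈ gens H, lfun y g = 1 := by
  obtain ⟨i, j, hij⟩ := hedge
  rcases hy hij with h | h
  · exact ⟨gvec i j, ⟨i, j, hij, rfl⟩, by rw [lfun_gvec]; exact h⟩
  · exact ⟨gvec j i, ⟨j, i, hij.symm, rfl⟩, by rw [lfun_gvec]; linarith⟩

lemma faceOf_exposed (hsub : SubUnit H y) (ht : ∃ g ∈ gens H, lfun y g = 1) :
    IsExposed ℝ (symEdgePolytope H) (faceOf H y) := by
  intro _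
  refine ⟨lfun y, ?_⟩
  obtain ⟨g, hg, hg1⟩ := ht
  ext x
  constructor
  · rintro ⟨hxP, hx1⟩
    exact ⟨hxP, fun z hz => by rw [hx1]; exact le_one_on hsub z hz⟩
  · rintro ⟨hxP, hmax⟩
    refine ⟨hxP, le_antisymm (le_one_on hsub x hxP) ?_⟩
    have := hmax g (gens_subset_polytope hg)
    rw [hg1] at this; exact this

lemma faceOf_nonempty (hy : UnitStep H y) (hedge : ∃ i j : V, H.Adj i j) :
    (faceOf H y).Nonempty := by
  obtain ⟨g, hg, hg1⟩ := exists_tight hy hedge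
  exact ⟨g, gens_subset_polytope hg, hg1⟩

lemma faceOf_ne (hy : UnitStep H y) (hedge : ∃ i j : V, H.Adj i j) :
    faceOf H y ≠ symEdgePolytope H := by
  obtain ⟨i, j, hij⟩ := hedge
  intro heq
  have h1 : gvec i j ∈ symEdgePolytope H := gens_subset_polytope ⟨i, j, hij, rfl⟩
  have h2 : gvec j i ∈ symEdgePolytope H := gens_subset_polytope ⟨j, i, hij.symm, rfl⟩
  have h1' : lfun y (gvec i j) = 1 := (heq ▸ h1 : gvec i j ∈ faceOf H y).2
  have h2' : lfun y (gvec j i) = 1 := (heq ▸ h2 : gvec j i ∈ faceOf H y).2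
  rw [lfun_gvec] at h1' h2'
  linarith

lemma faceOf_convex : Convex ℝ (faceOf H y) := by
  have : faceOf H y = symEdgePolytope H ∩ {x | lfun y x = 1} := rfl
  rw [this]
  exact (convex_convexHull ℝ _).inter
    (convex_hyperplane ⟨fun a b => map_add _ a b, fun c a => map_smul _ c a⟩ 1)

lemma faceOf_eq_hull (hsub : SubUnit H y) :
    faceOf H y = convexHull ℝ {g | g ∈ gens H ∧ lfun y g = 1} := by
  apply Set.Subset.antisymm
  · rintro x ⟨hxP, hx1⟩
    exact mem_hull_tight (fun s hs => le_one_on hsub s (gens_subset_polytope hs))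
      ((symEdgePolytope_eq H) ▸ hxP) hx1
  · apply convexHull_min ?_ faceOf_convex
    rintro g ⟨hg, hg1⟩
    exact ⟨gens_subset_polytope hg, hg1⟩

end Aux3
section Round

/-- Round `z` to the lattice `εf + 2ℤ`, within `(z - 1, z + 1]`. -/
noncomputable def rnd (εf z : ℝ) : ℝ := εf + 2 * ⌊(z + 1 - εf) / 2⌋

lemma rnd_le (εf z : ℝ) : rnd εf z ≤ z + 1 := by
  have h := Int.floor_le ((z + 1 - εf) / 2)
  unfold rnd; linarith

lemma lt_rnd (εf z : ℝ) : z - 1 < rnd εf z := by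
  have h := Int.lt_floor_add_one ((z + 1 - εf) / 2)
  unfold rnd; linarith

lemma rnd_step {εi εj zi zj : ℝ} (hε : εi - εj = 1 ∨ εi - εj = -1)
    (hij : zi - zj ≤ 1) (hji : zj - zi ≤ 1) :
    rnd εi zi - rnd εj zj = 1 ∨ rnd εi zi - rnd εj zj = -1 := by
  set a : ℤ := ⌊(zi + 1 - εi) / 2⌋ with ha
  set b : ℤ := ⌊(zj + 1 - εj) / 2⌋ with hb
  have hd : rnd εi zi - rnd εj zj = (εi - εj) + 2 * ((a : ℝ) - (b : ℝ)) := by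
    unfold rnd; rw [← ha, ← hb]; ring
  have hub : rnd εi zi - rnd εj zj < 3 := by
    have := rnd_le εi zi; have := lt_rnd εj zj; linarith
  have hlb : -3 < rnd εi zi - rnd εj zj := by
    have := lt_rnd εi zi; have := rnd_le εj zj; linarith
  have hk : ((a - b : ℤ) : ℝ) = (a : ℝ) - (b : ℝ) := by push_cast; ring
  rcases hε with hε | hε <;> rw [hε] at hd
  · have h1' : (-4 : ℤ) < 2 * (a - b) := by
      have : (-4 : ℝ) < 2 * ((a - b : ℤ) : ℝ) := by rw [hk]; linarith
      exact_mod_cast this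
    have h2' : 2 * (a - b) < 2 := by
      have : 2 * ((a - b : ℤ) : ℝ) < (2 : ℝ) := by rw [hk]; linarith
      exact_mod_cast this
    have hcase : a - b = -1 ∨ a - b = 0 := by omega
    rcases hcase with h | h
    · right; rw [hd, ← hk, h]; norm_num
    · left; rw [hd, ← hk, h]; norm_num
  · have h1' : (-2 : ℤ) < 2 * (a - b) := by
      have : (-2 : ℝ) < 2 * ((a - b : ℤ) : ℝ) := by rw [hk]; linarith
      exact_mod_cast this
    have h2' : 2 * (a - b) < 4 := by
      have : 2 * ((a - b : ℤ) : ℝ) < (4 : ℝ) := by rw [hk]; linarith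
      exact_mod_cast this
    have hcase : a - b = 0 ∨ a - b = 1 := by omega
    rcases hcase with h | h
    · right; rw [hd, ← hk, h]; norm_num
    · left; rw [hd, ← hk, h]; norm_num

lemma rnd_tight {εi εj zi zj : ℝ} (hε : εi - εj = 1 ∨ εi - εj = -1)
    (hij : zi - zj ≤ 1) (hji : zj - zi ≤ 1) (ht : zi - zj = 1) :
    rnd εi zi - rnd εj zj = 1 := by
  rcases rnd_step hε hij hji with h | h
  · exact h
  · exfalso
    have h1 := lt_rnd εi zi
    have h2 := rnd_le εj zj
    linarith

end Round
section Core

set_option linter.unusedSectionVars false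

variable {V : Type*} [Fintype V] [DecidableEq V] {H : SimpleGraph V}

/-- Any nonempty proper exposed face of the symmetric edge polytope is cut out by a
functional `lfun z` with `z` sub-unit, at level 1. -/
lemma exposed_repr (hedge : ∃ i j : V, H.Adj i j) {F : Set (V → ℝ)}
    (hexp : IsExposed ℝ (symEdgePolytope H) F) (hne : F ≠ symEdgePolytope H)
    (hF : F.Nonempty) :
    ∃ z : V → ℝ, SubUnit H z ∧ F = faceOf H z := by
  obtain ⟨l, hl⟩ := hexp hF
  obtain ⟨x₀, hx₀⟩ := hF
  set m := l x₀ with hm_def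
  have hx₀' : x₀ ∈ symEdgePolytope H ∧ ∀ w ∈ symEdgePolytope H, l w ≤ m := by
    rw [hl] at hx₀; exact hx₀
  have hFm : F = {x ∈ symEdgePolytope H | l x = m} := by
    rw [hl]; ext x
    constructor
    · rintro ⟨hxP, hxmax⟩
      exact ⟨hxP, le_antisymm (hx₀'.2 x hxP) (hxmax x₀ hx₀'.1)⟩
    · rintro ⟨hxP, hxm⟩
      exact ⟨hxP, fun w hw => hxm ▸ hx₀'.2 w hw⟩
  have hm : 0 < m := by
    by_contra hcon
    push_neg at hcon
    have hz0 : ∀ g ∈ gens H, l g = 0 := by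
      intro g hg
      have h1 : l g ≤ m := hx₀'.2 g (gens_subset_polytope hg)
      have h2 : l (-g) ≤ m := hx₀'.2 (-g) (gens_subset_polytope (neg_mem_gens hg))
      rw [map_neg] at h2
      linarith
    have hall : ∀ x ∈ symEdgePolytope H, l x = 0 := by
      intro x hx
      have : l x = (0 : (V → ℝ) →L[ℝ] ℝ) x := agree_on (fun g hg => by
        rw [hz0 g hg]; simp) hx
      simpa using this
    obtain ⟨i0, j0, hadj0⟩ := hedge
    have hm0 : m = 0 := by
      have hg0 : l (gvec i0 j0) = 0 := hz0 _ ⟨i0, j0, hadj0, rfl⟩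
      have := hx₀'.2 (gvec i0 j0) (gens_subset_polytope ⟨i0, j0, hadj0, rfl⟩)
      rw [hg0] at this
      linarith
    apply hne
    rw [hFm]
    ext x
    simp only [Set.mem_setOf_eq]
    exact ⟨fun h => h.1, fun h => ⟨h, by rw [hall x h, hm0]⟩⟩
  refine ⟨fun v => l (Pi.single v 1) / m, ?_, ?_⟩
  · intro i j hij
    have hgP : gvec i j ∈ symEdgePolytope H := gens_subset_polytope ⟨i, j, hij, rfl⟩
    have hb : l (gvec i j) ≤ m := hx₀'.2 _ hgP
    have hsplit : l (gvec i j) = l (Pi.single i 1) - l (Pi.single j 1) := by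
      rw [gvec_eq_single, map_sub]
    rw [div_sub_div_same, div_le_one hm, ← hsplit]
    exact hb
  · have hagree : ∀ x ∈ symEdgePolytope H,
        l x = (m • lfun (fun v => l (Pi.single v 1) / m)) x := by
      intro x hx
      apply agree_on ?_ hx
      rintro g ⟨i, j, hij, rfl⟩
      rw [ContinuousLinearMap.smul_apply, lfun_gvec, gvec_eq_single, map_sub]
      rw [smul_eq_mul]
      field_simp
    rw [hFm]
    ext x
    simp only [faceOf, Set.mem_setOf_eq]
    constructor
    · rintro ⟨hxP, hxm⟩
      refine ⟨hxP, ?_⟩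
      have := hagree x hxP
      rw [hxm, ContinuousLinearMap.smul_apply, smul_eq_mul] at this
      field_simp at this
      linarith [this]
    · rintro ⟨hxP, hx1⟩
      refine ⟨hxP, ?_⟩
      have := hagree x hxP
      rw [ContinuousLinearMap.smul_apply, smul_eq_mul, hx1, mul_one] at this
      exact this

/-- For unit-step `y`, `faceOf H y` is a facet. -/
lemma faceOf_isFacet (hedge : ∃ i j : V, H.Adj i j) {y : V → ℝ} (hy : UnitStep H y) :
    IsFacet (symEdgePolytope H) (faceOf H y) := by
  refine ⟨faceOf_exposed hy.subUnit (exists_tight hy hedge), faceOf_ne hy hedge, ?_⟩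
  intro F' hexp hne hsub
  have hF' : F'.Nonempty := (faceOf_nonempty hy hedge).mono hsub
  obtain ⟨z, hzsub, hF'z⟩ := exposed_repr hedge hexp hne hF'
  have htight : ∀ ⦃i j : V⦄, H.Adj i j → y i - y j = 1 → z i - z j = 1 := by
    intro i j hij hyij
    have hg : gvec i j ∈ faceOf H y :=
      ⟨gens_subset_polytope ⟨i, j, hij, rfl⟩, by rw [lfun_gvec]; exact hyij⟩
    have := hsub hg
    rw [hF'z] at this
    have h1 := this.2
    rwa [lfun_gvec] at h1
  have hgeq : ∀ g ∈ gens H, lfun z g = lfun y g := by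
    rintro g ⟨i, j, hij, rfl⟩
    rw [lfun_gvec, lfun_gvec]
    rcases hy hij with h | h
    · rw [h, htight hij h]
    · have h' : y j - y i = 1 := by linarith
      have := htight hij.symm h'
      linarith
  rw [hF'z]
  ext x
  simp only [faceOf, Set.mem_setOf_eq]
  exact ⟨fun ⟨hxP, hx1⟩ => ⟨hxP, by rw [← agree_on hgeq hxP]; exact hx1⟩,
    fun ⟨hxP, hx1⟩ => ⟨hxP, by rw [agree_on hgeq hxP]; exact hx1⟩⟩

/-- Every facet of the symmetric edge polytope of a graph with a proper
"±1-coloring" is of the form `faceOf H y` with `y` unit-step. -/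
lemma facet_repr (hedge : ∃ i j : V, H.Adj i j) (εf : V → ℝ)
    (hεf : ∀ ⦃i j : V⦄, H.Adj i j → εf i - εf j = 1 ∨ εf i - εf j = -1)
    {F : Set (V → ℝ)} (hF : IsFacet (symEdgePolytope H) F) :
    ∃ y : V → ℝ, UnitStep H y ∧ F = faceOf H y := by
  obtain ⟨hexp, hne, hmax⟩ := hF
  have hεunit : UnitStep H εf := hεf
  have hFne : F.Nonempty := by
    by_contra hcon
    rw [Set.not_nonempty_iff_eq_empty] at hcon
    have h1 := hmax (faceOf H εf) (faceOf_exposed hεunit.subUnit (exists_tight hεunit hedge))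
      (faceOf_ne hεunit hedge) (by rw [hcon]; exact Set.empty_subset _)
    have h2 := faceOf_nonempty hεunit hedge
    rw [h1, hcon] at h2
    exact Set.not_nonempty_empty h2
  obtain ⟨z, hzsub, hFz⟩ := exposed_repr hedge hexp hne hFne
  set y : V → ℝ := fun v => rnd (εf v) (z v) with hy_def
  have hy : UnitStep H y := fun i j hij => rnd_step (hεf hij) (hzsub hij) (hzsub hij.symm)
  have hsub2 : F ⊆ faceOf H y := by
    intro x hx
    rw [hFz] at hx
    obtain ⟨hxP, hx1⟩ := hx
    have hx' : x ∈ convexHull ℝ {g | g ∈ gens H ∧ lfun z g = 1} :=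
      mem_hull_tight (fun s hs => le_one_on hzsub s (gens_subset_polytope hs))
        ((symEdgePolytope_eq H) ▸ hxP) hx1
    apply convexHull_min ?_ faceOf_convex hx'
    rintro g ⟨⟨i, j, hij, rfl⟩, hg1⟩
    rw [lfun_gvec] at hg1
    refine ⟨gens_subset_polytope ⟨i, j, hij, rfl⟩, ?_⟩
    rw [lfun_gvec]
    exact rnd_tight (hεf hij) (hzsub hij) (hzsub hij.symm) hg1
  exact ⟨y, hy, (hmax (faceOf H y) (faceOf_exposed hy.subUnit (exists_tight hy hedge))
    (faceOf_ne hy hedge) hsub2).symm⟩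

lemma const_of_preconnected (hp : H.Preconnected) {d : V → ℝ}
    (h : ∀ ⦃i j : V⦄, H.Adj i j → d i = d j) (u v : V) : d u = d v := by
  obtain ⟨w⟩ := hp u v
  induction w with
  | nil => rfl
  | cons h' _ ih => exact (h h').trans ih

lemma exists_adj_of_reachable {u v : V} (h : H.Reachable u v) (hne : u ≠ v) :
    ∃ i j : V, H.Adj i j := by
  obtain ⟨w⟩ := h
  cases w with
  | nil => exact absurd rfl hne
  | cons h' _ => exact ⟨_, _, h'⟩

end Core
/-- Let `G` be a connected bipartite graph and `e` an edge of `G` such that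
`G - e` is connected. Then `N(P_G) ≤ N(P_{G - e})`. -/
theorem numFacets_le_of_deleteEdge {V : Type*} [Fintype V] [DecidableEq V]
    (G : SimpleGraph V) (hG : G.Connected) (hbip : G.Colorable 2)
    (e : Sym2 V) (he : e ∈ G.edgeSet) (hconn : (G.deleteEdges {e}).Connected) :
    numFacets (symEdgePolytope G) ≤ numFacets (symEdgePolytope (G.deleteEdges {e})) := by
  classical
  revert he hconn
  induction e using Sym2.ind with
  | _ u v =>
  intro he hconn
  set H' := G.deleteEdges {s(u, v)} with hH'def
  have hH'adj : ∀ ⦃i j : V⦄, H'.Adj i j → G.Adj i j :=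
    fun i j h => (G.deleteEdges_le {s(u, v)}) h
  -- the ±1 coloring coming from bipartiteness
  obtain ⟨C⟩ := hbip
  set εf : V → ℝ := fun w => ((C w : Fin 2) : ℕ) with hεdef
  have hεf : ∀ ⦃i j : V⦄, G.Adj i j → εf i - εf j = 1 ∨ εf i - εf j = -1 := by
    intro i j hij
    have hne := C.valid hij
    have hi : ((C i : Fin 2) : ℕ) < 2 := (C i).isLt
    have hj : ((C j : Fin 2) : ℕ) < 2 := (C j).isLt
    have hvne : ((C i : Fin 2) : ℕ) ≠ ((C j : Fin 2) : ℕ) := fun h => hne (Fin.ext h)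
    have hcase : (((C i : Fin 2) : ℕ) = 1 ∧ ((C j : Fin 2) : ℕ) = 0) ∨
        (((C i : Fin 2) : ℕ) = 0 ∧ ((C j : Fin 2) : ℕ) = 1) := by omega
    rcases hcase with ⟨h1, h2⟩ | ⟨h1, h2⟩
    · left; simp only [hεdef, h1, h2]; norm_num
    · right; simp only [hεdef, h1, h2]; norm_num
  have hεf' : ∀ ⦃i j : V⦄, H'.Adj i j → εf i - εf j = 1 ∨ εf i - εf j = -1 :=
    fun i j h => hεf (hH'adj h)
  -- edges exist
  have huv : G.Adj u v := G.mem_edgeSet.mp he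
  have hedgeG : ∃ i j : V, G.Adj i j := ⟨u, v, huv⟩
  have hedge' : ∃ i j : V, H'.Adj i j :=
    exists_adj_of_reachable (hconn.preconnected u v) huv.ne
  -- the canonical map on faces
  have hface : ∀ y : V → ℝ, UnitStep G y →
      convexHull ℝ {g | g ∈ gens H' ∧ g ∈ faceOf G y} = faceOf H' y := by
    intro y hy
    have hyH' : SubUnit H' y := by
      intro i j h
      rcases hy (hH'adj h) with h' | h' <;> linarith
    rw [faceOf_eq_hull hyH']
    congr 1
    ext g
    constructor
    · rintro ⟨hg, _, hg1⟩
      exact ⟨hg, hg1⟩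
    · rintro ⟨hg, hg1⟩
      exact ⟨hg, gens_subset_polytope (gens_mono (G.deleteEdges_le {s(u, v)}) hg), hg1⟩
  -- finiteness of the target facet set
  have hfinQ : {F | IsFacet (symEdgePolytope H') F}.Finite := by
    apply Set.Finite.subset (((gens_finite (H := H')).finite_subsets).image (convexHull ℝ))
    intro F hF
    obtain ⟨y, hy, rfl⟩ := facet_repr hedge' εf hεf' hF
    rw [faceOf_eq_hull hy.subUnit]
    exact ⟨_, fun g hg => hg.1, rfl⟩
  unfold numFacets
  apply Set.ncard_le_ncard_of_injOn
    (fun F => convexHull ℝ {g | g ∈ gens H' ∧ g ∈ F}) ?_ ?_ hfinQ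
  · -- maps facets to facets
    intro F hF
    obtain ⟨y, hy, rfl⟩ := facet_repr hedgeG εf hεf hF
    show IsFacet (symEdgePolytope H')
      (convexHull ℝ {g | g ∈ gens H' ∧ g ∈ faceOf G y})
    rw [hface y hy]
    have hyH' : UnitStep H' y := fun i j h => hy (hH'adj h)
    exact faceOf_isFacet hedge' hyH'
  · -- injectivity
    intro F₁ h₁ F₂ h₂ heq
    obtain ⟨y₁, hy₁, rfl⟩ := facet_repr hedgeG εf hεf h₁
    obtain ⟨y₂, hy₂, rfl⟩ := facet_repr hedgeG εf hεf h₂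
    have heq' : faceOf H' y₁ = faceOf H' y₂ := by
      rw [← hface y₁ hy₁, ← hface y₂ hy₂]; exact heq
    have hiff : ∀ ⦃i j : V⦄, H'.Adj i j → (y₁ i - y₁ j = 1 ↔ y₂ i - y₂ j = 1) := by
      intro i j hij
      constructor <;> intro h
      · have hg : gvec i j ∈ faceOf H' y₁ :=
          ⟨gens_subset_polytope ⟨i, j, hij, rfl⟩, by rw [lfun_gvec]; exact h⟩
        rw [heq'] at hg
        have := hg.2; rwa [lfun_gvec] at this
      · have hg : gvec i j ∈ faceOf H' y₂ :=
          ⟨gens_subset_polytope ⟨i, j, hij, rfl⟩, by rw [lfun_gvec]; exact h⟩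
        rw [← heq'] at hg
        have := hg.2; rwa [lfun_gvec] at this
    have hd : ∀ ⦃i j : V⦄, H'.Adj i j → y₁ i - y₂ i = y₁ j - y₂ j := by
      intro i j hij
      rcases hy₁ (hH'adj hij) with h1 | h1
      · have := (hiff hij).mp h1; linarith
      · have hn : ¬(y₁ i - y₁ j = 1) := by rw [h1]; norm_num
        have h2' : ¬(y₂ i - y₂ j = 1) := fun hc => hn ((hiff hij).mpr hc)
        rcases hy₂ (hH'adj hij) with h2 | h2
        · exact absurd h2 h2'
        · linarith
    have hconst := const_of_preconnected hconn.preconnected hd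
    have hgeq : ∀ g ∈ gens G, lfun y₁ g = lfun y₂ g := by
      rintro g ⟨i, j, hij, rfl⟩
      rw [lfun_gvec, lfun_gvec]
      have := hconst i j
      linarith
    ext x
    simp only [faceOf, Set.mem_setOf_eq]
    exact ⟨fun ⟨hxP, h1⟩ => ⟨hxP, by rw [← agree_on hgeq hxP]; exact h1⟩,
      fun ⟨hxP, h1⟩ => ⟨hxP, by rw [agree_on hgeq hxP]; exact h1⟩⟩
end

section
/- Let G be a graph on the vertex set [n−1] and suppose H is a facet subgraph of the suspension Ĝ with bipartition [n] = V₁ ⊔ V₂ where n ∈ V₁. Then μ(H) = 2^{c(G[V₂])}, where c(G[V₂]) is the number of connected components of the induced subgraph of G on V₂. -/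
open Finset

/-- `f : V → ℤ` defines a facet of the symmetric edge polytope of `G` if the hyperplane
`{x | ∑ i, f i * x i = 1}` supports a facet of it. -/
def DefinesFacet {V : Type*} [Fintype V] [DecidableEq V] (G : SimpleGraph V) (f : V → ℤ) :
    Prop :=
  (∀ x ∈ symEdgePolytope G, ∑ i : V, (f i : ℝ) * x i ≤ 1) ∧
    IsFacet (symEdgePolytope G) {x ∈ symEdgePolytope G | ∑ i : V, (f i : ℝ) * x i = 1}

/-- The facet subgraph associated with `f`: the spanning subgraph of `G` with edge set
`E_f = {{i, j} ∈ E(G) : |f i - f j| = 1}`. -/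
def facetSubgraph {V : Type*} (G : SimpleGraph V) (f : V → ℤ) : SimpleGraph V where
  Adj i j := G.Adj i j ∧ |f i - f j| = 1
  symm := by
    constructor
    rintro i j ⟨h1, h2⟩
    exact ⟨h1.symm, by rwa [abs_sub_comm]⟩
  loopless := by
    constructor
    rintro i ⟨h, -⟩
    exact G.loopless.irrefl i h

/-- `FS(G)`: the set of all facet subgraphs of `G`. -/
def facetSubgraphs {V : Type*} [Fintype V] [DecidableEq V] (G : SimpleGraph V) :
    Set (SimpleGraph V) :=
  {H | ∃ f : V → ℤ, DefinesFacet G f ∧ facetSubgraph G f = H}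

/-- `μ(H)`: the number of facets of the symmetric edge polytope of `G` whose facet
subgraph is `H`. -/
noncomputable def mu {V : Type*} [Fintype V] [DecidableEq V] (G : SimpleGraph V)
    (H : SimpleGraph V) : ℕ :=
  Set.ncard {F : Set (V → ℝ) | ∃ f : V → ℤ, DefinesFacet G f ∧
    F = {x ∈ symEdgePolytope G | ∑ i : V, (f i : ℝ) * x i = 1} ∧ facetSubgraph G f = H}

/-- The suspension `Ĝ` of a graph `G`: a new apex vertex (`none`) is joined to all
vertices of `G`. -/
def suspension {V : Type*} (G : SimpleGraph V) : SimpleGraph (Option V) where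
  Adj x y :=
    match x, y with
    | some a, some b => G.Adj a b
    | some _, none => True
    | none, some _ => True
    | none, none => False
  symm := by
    constructor
    rintro (_ | a) (_ | b) h
    · exact h
    · trivial
    · trivial
    · exact h.symm
  loopless := by
    constructor
    rintro (_ | a) h
    · exact h
    · exact G.loopless.irrefl a h

set_option linter.unusedSectionVars false
set_option linter.unusedVariables false
set_option maxHeartbeats 1000000

section AuxGeom
variable {W : Type*} [Fintype W] [DecidableEq W]

/-- the generating set of the symmetric edge polytope -/
def sepGen (G : SimpleGraph W) : Set (W → ℝ) :=
  {x : W → ℝ | ∃ i j : W, G.Adj i j ∧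
    x = fun k => (if k = i then (1 : ℝ) else 0) - (if k = j then (1 : ℝ) else 0)}

lemma symEdgePolytope_eq_s10 (G : SimpleGraph W) :
    symEdgePolytope G = convexHull ℝ (sepGen G) := rfl

/-- the vertex e_i - e_j -/
def evtx (i j : W) : W → ℝ :=
  fun k => (if k = i then (1 : ℝ) else 0) - (if k = j then (1 : ℝ) else 0)

lemma evtx_mem {G : SimpleGraph W} {i j : W} (h : G.Adj i j) : evtx i j ∈ sepGen G :=
  ⟨i, j, h, rfl⟩

lemma evtx_mem_poly {G : SimpleGraph W} {i j : W} (h : G.Adj i j) :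
    evtx i j ∈ symEdgePolytope G :=
  subset_convexHull ℝ _ (evtx_mem h)

/-- the linear functional x ↦ ∑ r i * x i as a continuous linear map -/
noncomputable def lmap (r : W → ℝ) : (W → ℝ) →L[ℝ] ℝ :=
  LinearMap.toContinuousLinearMap
  { toFun := fun x => ∑ i, r i * x i
    map_add' := by
      intro x y
      simp [mul_add, Finset.sum_add_distrib]
    map_smul' := by
      intro c x
      simp [Finset.mul_sum]
      ring_nf
      simp [mul_assoc, mul_comm, mul_left_comm] }

lemma lmap_apply (r : W → ℝ) (x : W → ℝ) : lmap r x = ∑ i, r i * x i := rfl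

lemma lmap_evtx (r : W → ℝ) {i j : W} (hij : i ≠ j) : lmap r (evtx i j) = r i - r j := by
  simp only [lmap_apply, evtx, mul_sub, Finset.sum_sub_distrib, mul_ite, mul_one, mul_zero]
  rw [Finset.sum_ite_eq' Finset.univ i r, Finset.sum_ite_eq' Finset.univ j r]
  simp

lemma lmap_int (f : W → ℤ) (x : W → ℝ) :
    lmap (fun i => (f i : ℝ)) x = ∑ i : W, (f i : ℝ) * x i := rfl

/-- points of the polytope have coordinate sum zero -/
lemma sum_zero_of_mem {G : SimpleGraph W} {x : W → ℝ} (hx : x ∈ symEdgePolytope G) :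
    ∑ i : W, x i = 0 := by
  have h : symEdgePolytope G ⊆ {y : W → ℝ | lmap (fun _ => (1:ℝ)) y = 0} := by
    rw [symEdgePolytope_eq_s10]
    apply convexHull_min
    · rintro y ⟨i, j, hij, rfl⟩
      have h2 : (fun k => (if k = i then (1 : ℝ) else 0) - (if k = j then (1 : ℝ) else 0))
          = evtx i j := rfl
      rw [Set.mem_setOf_eq, h2, lmap_evtx _ hij.ne]
      ring
    · have h3 : {y : W → ℝ | lmap (fun _ => (1:ℝ)) y = 0}
          = (lmap (fun _ => (1:ℝ))) ⁻¹' {0} := rfl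
      rw [h3]
      exact (convex_hyperplane (lmap (fun _ => (1:ℝ))).toLinearMap.isLinear 0)
  have := h hx
  simpa [lmap_apply] using this

/-- bound on hull from bound on edge differences -/
lemma lmap_le_one {G : SimpleGraph W} (r : W → ℝ)
    (hr : ∀ i j : W, G.Adj i j → r i - r j ≤ 1) :
    ∀ x ∈ symEdgePolytope G, lmap r x ≤ 1 := by
  intro x hx
  rw [symEdgePolytope_eq_s10] at hx
  have h : convexHull ℝ (sepGen G) ⊆ {y : W → ℝ | lmap r y ≤ 1} := by
    apply convexHull_min
    · rintro y ⟨i, j, hij, rfl⟩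
      have h2 : (fun k => (if k = i then (1 : ℝ) else 0) - (if k = j then (1 : ℝ) else 0))
          = evtx i j := rfl
      rw [Set.mem_setOf_eq, h2, lmap_evtx _ hij.ne]
      exact hr i j hij
    · exact convex_halfSpace_le (lmap r).toLinearMap.isLinear 1
  exact h hx

/-- transfer lemma on convex hulls -/
lemma transfer_eq_one {s : Set (W → ℝ)} (l₁ l₂ : (W → ℝ) →L[ℝ] ℝ) {x : W → ℝ}
    (hx : x ∈ convexHull ℝ s) (h1 : ∀ y ∈ s, l₁ y ≤ 1) (hx1 : l₁ x = 1)
    (h12 : ∀ y ∈ s, l₁ y = 1 → l₂ y = 1) : l₂ x = 1 := by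
  rw [_root_.convexHull_eq] at hx
  obtain ⟨ι, t, w, z, hw0, hw1, hz, hx⟩ := hx
  rw [Finset.centerMass_eq_of_sum_1 _ _ hw1] at hx
  subst hx
  have hl1 : ∀ (l : (W → ℝ) →L[ℝ] ℝ), l (∑ i ∈ t, w i • z i) = ∑ i ∈ t, w i * l (z i) := by
    intro l
    rw [map_sum]
    simp [smul_eq_mul]
  have key : ∀ i ∈ t, w i * (1 - l₁ (z i)) = 0 := by
    have hsum : ∑ i ∈ t, w i * (1 - l₁ (z i)) = 0 := by
      have h4 := hl1 l₁
      rw [hx1] at h4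
      have h5 : ∑ i ∈ t, w i * l₁ (z i) = 1 := h4.symm
      calc ∑ i ∈ t, w i * (1 - l₁ (z i)) = ∑ i ∈ t, w i - ∑ i ∈ t, w i * l₁ (z i) := by
            rw [← Finset.sum_sub_distrib]; congr 1; ext i; ring
        _ = 0 := by rw [hw1, h5]; ring
    intro i hi
    have hnn : ∀ i ∈ t, 0 ≤ w i * (1 - l₁ (z i)) := fun i hi =>
      mul_nonneg (hw0 i hi) (by linarith [h1 (z i) (hz i hi)])
    exact (Finset.sum_eq_zero_iff_of_nonneg hnn).1 hsum i hi
  rw [hl1 l₂]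
  have h6 : ∀ i ∈ t, w i * l₂ (z i) = w i := by
    intro i hi
    rcases mul_eq_zero.1 (key i hi) with h | h
    · rw [h]; ring
    · have h7 : l₁ (z i) = 1 := by linarith
      rw [h12 (z i) (hz i hi) h7]; ring
  rw [Finset.sum_congr rfl h6, hw1]

/-- the slice of the polytope cut out by an integral functional `g` -/
lemma slice_eq (G : SimpleGraph W) (g : W → ℤ) :
    {x ∈ symEdgePolytope G | ∑ i : W, (g i : ℝ) * x i = 1}
      = {x ∈ symEdgePolytope G | lmap (fun i => (g i : ℝ)) x = 1} := rfl

lemma lmap_int_evtx (f : W → ℤ) {i j : W} (hij : i ≠ j) :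
    lmap (fun k => (f k : ℝ)) (evtx i j) = ((f i - f j : ℤ) : ℝ) := by
  rw [lmap_evtx _ hij]
  push_cast
  ring

/-- main construction lemma: an integral functional with bounded edge differences whose
facet subgraph is connected defines a facet. -/
lemma definesFacet_of (G : SimpleGraph W) (g : W → ℤ)
    (hb : ∀ i j : W, G.Adj i j → g i - g j ≤ 1)
    (hconn : ∀ x y : W, (facetSubgraph G g).Reachable x y)
    (i₀ j₀ : W) (hadj₀ : G.Adj i₀ j₀) (hdiff₀ : g i₀ - g j₀ = 1) :
    DefinesFacet G g := by
  have hbr : ∀ i j : W, G.Adj i j → (fun k => (g k : ℝ)) i - (fun k => (g k : ℝ)) j ≤ 1 := by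
    intro i j h
    have := hb i j h
    simp only
    exact_mod_cast this
  have hble : ∀ x ∈ symEdgePolytope G, lmap (fun k => (g k : ℝ)) x ≤ 1 :=
    lmap_le_one _ hbr
  have hlsum : ∀ x : W → ℝ, lmap (fun k => (g k : ℝ)) x = ∑ i : W, (g i : ℝ) * x i :=
    fun x => rfl
  have hv₀P : evtx i₀ j₀ ∈ symEdgePolytope G := evtx_mem_poly hadj₀
  have hlv₀ : lmap (fun k => (g k : ℝ)) (evtx i₀ j₀) = 1 := by
    rw [lmap_int_evtx g hadj₀.ne, hdiff₀]
    norm_num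
  have hv₀F : evtx i₀ j₀ ∈ {x ∈ symEdgePolytope G | ∑ i : W, (g i : ℝ) * x i = 1} :=
    ⟨hv₀P, hlv₀⟩
  have hw₀P : evtx j₀ i₀ ∈ symEdgePolytope G := evtx_mem_poly hadj₀.symm
  have hlw₀ : lmap (fun k => (g k : ℝ)) (evtx j₀ i₀) = -1 := by
    rw [lmap_int_evtx g hadj₀.symm.ne, show g j₀ - g i₀ = -1 by omega]
    norm_num
  refine ⟨fun x hx => by rw [← hlsum]; exact hble x hx, ?_, ?_, ?_⟩
  · -- exposed
    intro _
    refine ⟨lmap (fun k => (g k : ℝ)), ?_⟩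
    ext x
    constructor
    · rintro ⟨hxP, hx1⟩
      have hx1' : lmap (fun k => (g k : ℝ)) x = 1 := hx1
      exact ⟨hxP, fun y hy => by rw [hx1']; exact hble y hy⟩
    · rintro ⟨hxP, hxmax⟩
      refine ⟨hxP, (le_antisymm (hble x hxP) ?_ : lmap (fun k => (g k : ℝ)) x = 1)⟩
      have := hxmax _ hv₀P
      rw [hlv₀] at this
      exact this
  · -- F ≠ P
    intro hFP
    have h8 : evtx j₀ i₀ ∈ {x ∈ symEdgePolytope G | ∑ i : W, (g i : ℝ) * x i = 1} := by
      rw [hFP]; exact hw₀P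
    have h9 : lmap (fun k => (g k : ℝ)) (evtx j₀ i₀) = 1 := h8.2
    rw [hlw₀] at h9
    norm_num at h9
  · -- maximality
    intro F' hexp' hne' hsub
    have hv₀F' : evtx i₀ j₀ ∈ F' := hsub hv₀F
    obtain ⟨l', hF'⟩ := hexp' ⟨_, hv₀F'⟩
    have hv₀mem := hv₀F'
    rw [hF'] at hv₀mem
    obtain ⟨-, hmaxv₀⟩ := hv₀mem
    -- the coefficient function of l'
    have hevtx_split : ∀ i j : W, evtx i j
        = (fun k => if i = k then (1:ℝ) else 0) - (fun k => if j = k then (1:ℝ) else 0) := by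
      intro i j
      funext k
      simp [evtx, eq_comm]
    have hl'evtx : ∀ i j : W, l' (evtx i j)
        = l' (fun k => if i = k then (1:ℝ) else 0) - l' (fun k => if j = k then (1:ℝ) else 0) := by
      intro i j
      rw [hevtx_split, map_sub]
    -- value of l' on points of F'
    have hfval : ∀ x ∈ F', l' x = l' (evtx i₀ j₀) := by
      intro x hx
      rw [hF'] at hx
      obtain ⟨hxP, hxmax⟩ := hx
      exact le_antisymm (hmaxv₀ x hxP) (hxmax _ hv₀P)
    -- relations along facet subgraph edges
    have hrel : ∀ i j : W, (facetSubgraph G g).Adj i j →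
        l' (fun k => if i = k then (1:ℝ) else 0) - l' (fun k => if j = k then (1:ℝ) else 0)
          = l' (evtx i₀ j₀) * ((g i : ℝ) - g j) := by
      rintro i j ⟨hij, habs⟩
      rcases (abs_eq (by norm_num : (0:ℤ) ≤ 1)).mp habs with h1 | h1
      · have hmemF : evtx i j ∈ {x ∈ symEdgePolytope G | ∑ i : W, (g i : ℝ) * x i = 1} := by
          refine ⟨evtx_mem_poly hij, ?_⟩
          show lmap (fun k => (g k : ℝ)) (evtx i j) = 1
          rw [lmap_int_evtx g hij.ne, h1]
          norm_num
        have hval := hfval _ (hsub hmemF)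
        rw [hl'evtx] at hval
        have hc : ((g i : ℝ)) - g j = 1 := by exact_mod_cast h1
        rw [hc, hval]
        ring
      · have h2 : g j - g i = 1 := by omega
        have hmemF : evtx j i ∈ {x ∈ symEdgePolytope G | ∑ i : W, (g i : ℝ) * x i = 1} := by
          refine ⟨evtx_mem_poly hij.symm, ?_⟩
          show lmap (fun k => (g k : ℝ)) (evtx j i) = 1
          rw [lmap_int_evtx g hij.symm.ne, h2]
          norm_num
        have hval := hfval _ (hsub hmemF)
        rw [hl'evtx] at hval
        have hc : ((g i : ℝ)) - g j = -1 := by exact_mod_cast h1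
        rw [hc]
        linarith [hval]
    -- propagate along walks
    have hwalk : ∀ (x y : W) (p : (facetSubgraph G g).Walk x y),
        l' (fun k => if x = k then (1:ℝ) else 0) - l' (fun k => if y = k then (1:ℝ) else 0)
          = l' (evtx i₀ j₀) * ((g x : ℝ) - g y) := by
      intro x y p
      induction p with
      | nil => simp
      | @cons u v w h p ih =>
        have hstep := hrel u v h
        have hsplit : l' (evtx i₀ j₀) * ((g u : ℝ) - g w)
            = l' (evtx i₀ j₀) * ((g u : ℝ) - g v) + l' (evtx i₀ j₀) * ((g v : ℝ) - g w) := by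
          ring
        rw [hsplit, ← hstep, ← ih]
        ring
    -- affine representation of l'
    have hgk : ∀ k : W, l' (fun j => if k = j then (1:ℝ) else 0)
        = l' (evtx i₀ j₀) * (g k : ℝ)
          + (l' (fun j => if i₀ = j then (1:ℝ) else 0) - l' (evtx i₀ j₀) * (g i₀ : ℝ)) := by
      intro k
      obtain ⟨p⟩ := hconn k i₀
      have := hwalk k i₀ p
      linarith
    have hl'P : ∀ x : W → ℝ, l' x
        = l' (evtx i₀ j₀) * (∑ i : W, (g i : ℝ) * x i)
          + (l' (fun j => if i₀ = j then (1:ℝ) else 0) - l' (evtx i₀ j₀) * (g i₀ : ℝ))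
            * ∑ k : W, x k := by
      intro x
      conv_lhs => rw [pi_eq_sum_univ x, map_sum]
      simp only [map_smul, smul_eq_mul]
      rw [Finset.mul_sum, Finset.mul_sum, ← Finset.sum_add_distrib]
      apply Finset.sum_congr rfl
      intro k _
      rw [hgk k]
      ring
    have hl'P0 : ∀ x ∈ symEdgePolytope G,
        l' x = l' (evtx i₀ j₀) * lmap (fun k => (g k : ℝ)) x := by
      intro x hx
      rw [hl'P x, sum_zero_of_mem hx, hlsum]
      ring
    -- m is positive
    have hm_pos : 0 < l' (evtx i₀ j₀) := by
      have hF'subP : F' ⊆ symEdgePolytope G := by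
        rw [hF']; exact fun x hx => hx.1
      have hss : F' ⊂ symEdgePolytope G :=
        ⟨hF'subP, fun hPsub => hne' (Set.Subset.antisymm hF'subP hPsub)⟩
      obtain ⟨p, hpP, hpF'⟩ := Set.exists_of_ssubset hss
      have hple : l' p ≤ l' (evtx i₀ j₀) := hmaxv₀ p hpP
      have hplt : l' p < l' (evtx i₀ j₀) := by
        rcases lt_or_eq_of_le hple with h | h
        · exact h
        · exfalso
          apply hpF'
          rw [hF']
          exact ⟨hpP, fun y hy => by rw [h]; exact hmaxv₀ y hy⟩
      have h1p : lmap (fun k => (g k : ℝ)) p ≤ 1 := hble p hpP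
      have h1v : l' p = l' (evtx i₀ j₀) * lmap (fun k => (g k : ℝ)) p := hl'P0 p hpP
      nlinarith
    -- conclude F' = F
    ext x
    constructor
    · intro hx
      have hxP : x ∈ symEdgePolytope G := by
        rw [hF'] at hx
        exact hx.1
      have hxv := hfval x hx
      rw [hl'P0 x hxP] at hxv
      have hlx : lmap (fun k => (g k : ℝ)) x = 1 :=
        mul_left_cancel₀ hm_pos.ne' (by rw [hxv, mul_one])
      exact ⟨hxP, hlx⟩
    · intro hx
      obtain ⟨hxP, hx1⟩ := hx
      have hx1' : lmap (fun k => (g k : ℝ)) x = 1 := hx1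
      rw [hF']
      refine ⟨hxP, fun y hy => ?_⟩
      rw [hl'P0 y hy, hl'P0 x hxP, hx1', mul_one]
      exact mul_le_of_le_one_right hm_pos.le (hble y hy)

end AuxGeom

section AuxConn
variable {W : Type*} [Fintype W] [DecidableEq W]

/-- a walk entering the complement of a set must cross it -/
lemma crossing_edge {G : SimpleGraph W} {C : Set W} :
    ∀ {x y : W}, G.Walk x y → x ∈ C → y ∉ C → ∃ a b : W, G.Adj a b ∧ a ∈ C ∧ b ∉ C := by
  intro x y p
  induction p with
  | nil => intro hx hy; exact absurd hx hy
  | @cons u v w h p ih =>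
    intro hx hy
    by_cases hv : v ∈ C
    · exact ih hv hy
    · exact ⟨u, v, h, hx, hv⟩

lemma int_diff_le_one_of_definesFacet {G : SimpleGraph W} {f : W → ℤ}
    (hf : DefinesFacet G f) : ∀ i j : W, G.Adj i j → f i - f j ≤ 1 := by
  intro i j hij
  have h1 := hf.1 _ (evtx_mem_poly hij)
  have h2 : lmap (fun k => (f k : ℝ)) (evtx i j) ≤ 1 := h1
  rw [lmap_int_evtx f hij.ne] at h2
  exact_mod_cast h2

/-- convenient packaging of the exposed/proper facts about a slice -/
lemma slice_exposed_ne (G : SimpleGraph W) (g : W → ℤ)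
    (hb : ∀ i j : W, G.Adj i j → g i - g j ≤ 1)
    {i₀ j₀ : W} (hadj₀ : G.Adj i₀ j₀) (hdiff₀ : g i₀ - g j₀ = 1) :
    IsExposed ℝ (symEdgePolytope G)
        {x ∈ symEdgePolytope G | lmap (fun k => (g k : ℝ)) x = 1} ∧
      {x ∈ symEdgePolytope G | lmap (fun k => (g k : ℝ)) x = 1} ≠ symEdgePolytope G ∧
      evtx i₀ j₀ ∈ {x ∈ symEdgePolytope G | lmap (fun k => (g k : ℝ)) x = 1} := by
  have hbr : ∀ i j : W, G.Adj i j → (fun k => (g k : ℝ)) i - (fun k => (g k : ℝ)) j ≤ 1 := by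
    intro i j h
    have := hb i j h
    simp only
    exact_mod_cast this
  have hble : ∀ x ∈ symEdgePolytope G, lmap (fun k => (g k : ℝ)) x ≤ 1 :=
    lmap_le_one _ hbr
  have hv₀P : evtx i₀ j₀ ∈ symEdgePolytope G := evtx_mem_poly hadj₀
  have hlv₀ : lmap (fun k => (g k : ℝ)) (evtx i₀ j₀) = 1 := by
    rw [lmap_int_evtx g hadj₀.ne, hdiff₀]; norm_num
  have hw₀P : evtx j₀ i₀ ∈ symEdgePolytope G := evtx_mem_poly hadj₀.symm
  have hlw₀ : lmap (fun k => (g k : ℝ)) (evtx j₀ i₀) = -1 := by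
    rw [lmap_int_evtx g hadj₀.symm.ne, show g j₀ - g i₀ = -1 by omega]; norm_num
  refine ⟨?_, ?_, hv₀P, hlv₀⟩
  · intro _
    refine ⟨lmap (fun k => (g k : ℝ)), ?_⟩
    ext x
    constructor
    · rintro ⟨hxP, hx1⟩
      exact ⟨hxP, fun y hy => by rw [hx1]; exact hble y hy⟩
    · rintro ⟨hxP, hxmax⟩
      refine ⟨hxP, le_antisymm (hble x hxP) ?_⟩
      have := hxmax _ hv₀P
      rw [hlv₀] at this
      exact this
  · intro hFP
    have h8 : evtx j₀ i₀ ∈ {x ∈ symEdgePolytope G | lmap (fun k => (g k : ℝ)) x = 1} := by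
      rw [hFP]; exact hw₀P
    have h9 : lmap (fun k => (g k : ℝ)) (evtx j₀ i₀) = 1 := h8.2
    rw [hlw₀] at h9
    norm_num at h9

/-- the facet subgraph of a facet-defining functional of a connected graph is connected -/
lemma facetSubgraph_preconnected {G : SimpleGraph W} (hpre : G.Preconnected) {f : W → ℤ}
    (hf : DefinesFacet G f) : (facetSubgraph G f).Preconnected := by
  classical
  intro u w
  by_contra hreach
  have hb := int_diff_le_one_of_definesFacet hf
  set C : Set W := {k | (facetSubgraph G f).Reachable u k} with hC
  have huC : u ∈ C := SimpleGraph.Reachable.refl u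
  have hwC : w ∉ C := hreach
  obtain ⟨p⟩ := hpre u w
  obtain ⟨a, b, hab, haC, hbC⟩ := crossing_edge p huC hwC
  -- non-facet edges crossing C have equal values
  have hcross : ∀ i j : W, G.Adj i j → (i ∈ C ↔ j ∈ C) → False → True := fun _ _ _ _ _ => trivial
  have hfs_same : ∀ i j : W, (facetSubgraph G f).Adj i j → (i ∈ C ↔ j ∈ C) := by
    intro i j hij
    constructor
    · intro hi; exact hi.trans hij.reachable
    · intro hj; exact hj.trans hij.symm.reachable
  have heq_of_cross : ∀ i j : W, G.Adj i j → ¬(i ∈ C ↔ j ∈ C) → f i = f j := by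
    intro i j hij hmix
    have hne : ¬(facetSubgraph G f).Adj i j := fun h => hmix (hfs_same i j h)
    have habs : |f i - f j| ≠ 1 := fun h => hne ⟨hij, h⟩
    have h1 : f i - f j ≤ 1 := hb i j hij
    have h2 : f j - f i ≤ 1 := hb j i hij.symm
    have h3 : f i - f j ≠ 1 := fun h => habs (by rw [h]; norm_num)
    have h4 : f i - f j ≠ -1 := fun h => habs (by rw [h]; norm_num)
    omega
  set g : W → ℤ := fun k => f k + (if k ∈ C then 1 else 0) with hg
  have hbg : ∀ i j : W, G.Adj i j → g i - g j ≤ 1 := by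
    intro i j hij
    by_cases hmix : i ∈ C ↔ j ∈ C
    · have : (if i ∈ C then (1:ℤ) else 0) = (if j ∈ C then (1:ℤ) else 0) := by
        by_cases hi : i ∈ C
        · rw [if_pos hi, if_pos (hmix.1 hi)]
        · rw [if_neg hi, if_neg (fun hj => hi (hmix.2 hj))]
      simp only [hg]
      have := hb i j hij
      omega
    · have heq := heq_of_cross i j hij hmix
      simp only [hg]
      by_cases hi : i ∈ C <;> by_cases hj : j ∈ C
      · exact absurd (iff_of_true hi hj) hmix
      · simp [hi, hj]; omega
      · simp [hi, hj]; omega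
      · exact absurd (iff_of_false hi hj) hmix
  have hfab : f a = f b := by
    apply heq_of_cross a b hab
    intro hiff
    exact hbC (hiff.1 haC)
  have hgab : g a - g b = 1 := by
    simp only [hg, if_pos haC, if_neg hbC]
    omega
  obtain ⟨hexp, hne, hmem⟩ := slice_exposed_ne G g hbg hab hgab
  obtain ⟨hle, hexp₀, hne₀, hmax₀⟩ := hf
  have hsub : {x ∈ symEdgePolytope G | ∑ i : W, (f i : ℝ) * x i = 1}
      ⊆ {x ∈ symEdgePolytope G | lmap (fun k => (g k : ℝ)) x = 1} := by
    rintro x ⟨hxP, hx1⟩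
    refine ⟨hxP, ?_⟩
    have hxP' := hxP
    rw [symEdgePolytope_eq_s10] at hxP'
    refine transfer_eq_one (lmap (fun k => (f k : ℝ))) (lmap (fun k => (g k : ℝ))) hxP'
      ?_ hx1 ?_
    · rintro y ⟨i, j, hij, rfl⟩
      have : lmap (fun k => (f k : ℝ)) (evtx i j) ≤ 1 := by
        rw [lmap_int_evtx f hij.ne]
        exact_mod_cast hb i j hij
      exact this
    · rintro y ⟨i, j, hij, rfl⟩
      intro hy1
      have hy1' : lmap (fun k => (f k : ℝ)) (evtx i j) = 1 := hy1
      rw [lmap_int_evtx f hij.ne] at hy1'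
      have hdiff : f i - f j = 1 := by exact_mod_cast hy1'
      have hfs : (facetSubgraph G f).Adj i j := ⟨hij, by rw [hdiff]; norm_num⟩
      have hiff := hfs_same i j hfs
      have hchi : (if i ∈ C then (1:ℤ) else 0) = (if j ∈ C then 1 else 0) := by
        by_cases hi : i ∈ C
        · rw [if_pos hi, if_pos (hiff.1 hi)]
        · rw [if_neg hi, if_neg (fun hj => hi (hiff.2 hj))]
      have hgd : g i - g j = 1 := by simp only [hg]; omega
      show lmap (fun k => (g k : ℝ)) (evtx i j) = 1
      rw [lmap_int_evtx g hij.ne, hgd]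
      norm_num
  have heq := hmax₀ _ hexp hne hsub
  have : evtx a b ∈ {x ∈ symEdgePolytope G | ∑ i : W, (f i : ℝ) * x i = 1} := by
    rw [← heq]; exact hmem
  have h1 : lmap (fun k => (f k : ℝ)) (evtx a b) = 1 := this.2
  rw [lmap_int_evtx f hab.ne] at h1
  have : f a - f b = 1 := by exact_mod_cast h1
  omega

/-- a facet subgraph has at least one edge -/
lemma exists_facetSubgraph_adj {G : SimpleGraph W} (hpre : G.Preconnected) {f : W → ℤ}
    (hf : DefinesFacet G f) : ∃ i j : W, (facetSubgraph G f).Adj i j := by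
  classical
  by_contra hno
  push_neg at hno
  have hb := int_diff_le_one_of_definesFacet hf
  obtain ⟨hle, hexp₀, hne₀, hmax₀⟩ := hf
  by_cases hedge : ∃ i j : W, G.Adj i j
  · obtain ⟨i₁, j₁, hij₁⟩ := hedge
    -- f is constant
    have heqadj : ∀ i j : W, G.Adj i j → f i = f j := by
      intro i j hij
      have habs : |f i - f j| ≠ 1 := fun h => hno i j ⟨hij, h⟩
      have h1 := hb i j hij
      have h2 := hb j i hij.symm
      have h3 : f i - f j ≠ 1 := fun h => habs (by rw [h]; norm_num)
      have h4 : f i - f j ≠ -1 := fun h => habs (by rw [h]; norm_num)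
      omega
    have hconst : ∀ x y : W, G.Reachable x y → f x = f y := by
      intro x y hxy
      obtain ⟨p⟩ := hxy
      induction p with
      | nil => rfl
      | @cons u v w h p ih => rw [heqadj u v h]; exact ih
    -- the slice of f is empty
    have hF0 : {x ∈ symEdgePolytope G | ∑ i : W, (f i : ℝ) * x i = 1} = ∅ := by
      ext x
      simp only [Set.mem_empty_iff_false, iff_false]
      rintro ⟨hxP, hx1⟩
      have : ∀ k : W, f k = f i₁ := fun k => hconst k i₁ (hpre k i₁)
      have hsum : ∑ i : W, (f i : ℝ) * x i = (f i₁ : ℝ) * ∑ i : W, x i := by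
        rw [Finset.mul_sum]
        apply Finset.sum_congr rfl
        intro k _
        rw [this k]
      rw [hsum, sum_zero_of_mem hxP] at hx1
      norm_num at hx1
    -- a nonempty proper exposed slice
    set g : W → ℤ := fun k => if k = i₁ then 1 else 0 with hg
    have hbg : ∀ i j : W, G.Adj i j → g i - g j ≤ 1 := by
      intro i j hij
      simp only [hg]
      by_cases hi : i = i₁ <;> by_cases hj : j = i₁ <;> simp [hi, hj]
    have hgd : g i₁ - g j₁ = 1 := by
      simp only [hg, if_pos rfl, if_neg (fun h : j₁ = i₁ => G.loopless.irrefl i₁ (h ▸ hij₁.symm))]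
      ring
    obtain ⟨hexp, hne, hmem⟩ := slice_exposed_ne G g hbg hij₁ hgd
    have hsub : {x ∈ symEdgePolytope G | ∑ i : W, (f i : ℝ) * x i = 1}
        ⊆ {x ∈ symEdgePolytope G | lmap (fun k => (g k : ℝ)) x = 1} := by
      rw [hF0]; exact Set.empty_subset _
    have heq := hmax₀ _ hexp hne hsub
    rw [hF0] at heq
    rw [heq] at hmem
    exact hmem
  · -- no edges at all: the polytope is empty
    push_neg at hedge
    have hgen : sepGen G = ∅ := by
      ext y
      simp only [Set.mem_empty_iff_false, iff_false]
      rintro ⟨i, j, hij, -⟩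
      exact hedge i j hij
    have hP : symEdgePolytope G = ∅ := by
      rw [symEdgePolytope_eq_s10, hgen, convexHull_empty]
    apply hne₀
    rw [hP]
    ext x
    simp [hP]

end AuxConn

section AuxMain

lemma walk_const {α : Type*} {β : Type*} {Gr : SimpleGraph α} {e : α → β}
    (h : ∀ u v : α, Gr.Adj u v → e u = e v) :
    ∀ {x y : α}, Gr.Walk x y → e x = e y := by
  intro x y p
  induction p with
  | nil => rfl
  | @cons u v w h' p ih => rw [h _ _ h']; exact ih

lemma walk_parity {α : Type*} {Hg : SimpleGraph α} {V₂ : Set α} {f : α → ℤ}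
    (hbip : ∀ x y : α, Hg.Adj x y → ((x ∈ V₂ ∧ y ∉ V₂) ∨ (x ∉ V₂ ∧ y ∈ V₂)))
    (hstep : ∀ x y : α, Hg.Adj x y → f x - f y = 1 ∨ f x - f y = -1) :
    ∀ {x y : α}, Hg.Walk x y → (((x ∈ V₂) ↔ (y ∈ V₂)) ↔ (f x - f y) % 2 = 0) := by
  intro x y p
  induction p with
  | nil => simp
  | @cons u v w h p ih =>
    have hd : (f u - f v) % 2 ≠ 0 := by rcases hstep u v h with h1 | h1 <;> omega
    have hx : (u ∈ V₂) ↔ ¬(v ∈ V₂) := by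
      rcases hbip u v h with ⟨h1, h2⟩ | ⟨h1, h2⟩ <;> simp [h1, h2]
    constructor
    · intro huw
      have h3 : ¬(v ∈ V₂ ↔ w ∈ V₂) := by tauto
      have h2 : ¬((f v - f w) % 2 = 0) := fun hh => h3 (ih.2 hh)
      omega
    · intro hpar
      have h2 : ¬((f v - f w) % 2 = 0) := by omega
      have h3 : ¬(v ∈ V₂ ↔ w ∈ V₂) := fun hh => h2 (ih.1 hh)
      tauto

variable {V : Type*}

lemma suspension_adj_some_none (G : SimpleGraph V) (v : V) :
    (suspension G).Adj (some v) none := trivial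

lemma suspension_adj_none_some (G : SimpleGraph V) (v : V) :
    (suspension G).Adj none (some v) := trivial

lemma suspension_adj_some_some (G : SimpleGraph V) (u v : V) :
    (suspension G).Adj (some u) (some v) ↔ G.Adj u v := Iff.rfl

lemma suspension_preconnected (G : SimpleGraph V) : (suspension G).Preconnected := by
  intro x y
  have h1 : ∀ z : Option V, (suspension G).Reachable z none := by
    intro z
    cases z with
    | none => exact SimpleGraph.Reachable.refl none
    | some a => exact (suspension_adj_some_none G a).reachable
  exact (h1 x).trans (h1 y).symm

open Classical in
/-- the sign functional associated with a choice of signs on the components of `G[V₂]` -/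
noncomputable def fsig (G : SimpleGraph V) (V₂' : Set V)
    (σ : (G.induce V₂').ConnectedComponent → Bool) : Option V → ℤ :=
  fun w => match w with
  | none => 0
  | some v =>
      if h : v ∈ V₂' then
        (if σ ((G.induce V₂').connectedComponentMk ⟨v, h⟩) then 1 else -1)
      else 0

lemma fsig_none (G : SimpleGraph V) (V₂' : Set V)
    (σ : (G.induce V₂').ConnectedComponent → Bool) : fsig G V₂' σ none = 0 := rfl

lemma fsig_mem (G : SimpleGraph V) (V₂' : Set V)
    (σ : (G.induce V₂').ConnectedComponent → Bool) {v : V} (h : v ∈ V₂') :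
    fsig G V₂' σ (some v)
      = if σ ((G.induce V₂').connectedComponentMk ⟨v, h⟩) then 1 else -1 := by
  simp only [fsig, dif_pos h]

lemma fsig_not_mem (G : SimpleGraph V) (V₂' : Set V)
    (σ : (G.induce V₂').ConnectedComponent → Bool) {v : V} (h : v ∉ V₂') :
    fsig G V₂' σ (some v) = 0 := by
  simp only [fsig, dif_neg h]

lemma fsig_eq_of_adj (G : SimpleGraph V) (V₂' : Set V)
    (σ : (G.induce V₂').ConnectedComponent → Bool) {u v : V} (hu : u ∈ V₂') (hv : v ∈ V₂')
    (h : G.Adj u v) : fsig G V₂' σ (some u) = fsig G V₂' σ (some v) := by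
  rw [fsig_mem G V₂' σ hu, fsig_mem G V₂' σ hv]
  have hadj : (G.induce V₂').Adj ⟨u, hu⟩ ⟨v, hv⟩ := by
    simp [SimpleGraph.comap_adj, h]
  rw [SimpleGraph.ConnectedComponent.connectedComponentMk_eq_of_adj hadj]

end AuxMain

/-- Let `G` be a graph on `[n-1]` and `H` a facet subgraph of the
suspension `Ĝ` with bipartition `V₁ ⊔ V₂`, where the apex lies in `V₁`. Then
`μ(H) = 2^(c(G[V₂]))`, where `c(G[V₂])` is the number of connected components of the
induced subgraph of `G` on `V₂`. -/
theorem mu_eq_two_pow_components {V : Type*} [Fintype V] [DecidableEq V]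
    (G : SimpleGraph V) (H : SimpleGraph (Option V))
    (hH : H ∈ facetSubgraphs (suspension G)) (V₂ : Set (Option V)) (hapex : none ∉ V₂)
    (hbip : ∀ x y : Option V, H.Adj x y → ((x ∈ V₂ ∧ y ∉ V₂) ∨ (x ∉ V₂ ∧ y ∈ V₂))) :
    mu (suspension G) H =
      2 ^ Nat.card (G.induce {v : V | some v ∈ V₂}).ConnectedComponent := by
  classical
  obtain ⟨f₀, hf₀, hfs₀⟩ := hH
  subst hfs₀
  set V₂' : Set V := {v : V | some v ∈ V₂} with hV₂'def
  have hpre : (suspension G).Preconnected := suspension_preconnected G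
  have hb₀ := int_diff_le_one_of_definesFacet hf₀
  have hHpre : (facetSubgraph (suspension G) f₀).Preconnected :=
    facetSubgraph_preconnected hpre hf₀
  have hstep₀ : ∀ x y : Option V, (facetSubgraph (suspension G) f₀).Adj x y →
      f₀ x - f₀ y = 1 ∨ f₀ x - f₀ y = -1 := by
    rintro x y ⟨-, habs⟩
    exact (abs_eq (by norm_num : (0:ℤ) ≤ 1)).mp habs
  have hpar : ∀ {x y : Option V}, (facetSubgraph (suspension G) f₀).Walk x y →
      (((x ∈ V₂) ↔ (y ∈ V₂)) ↔ (f₀ x - f₀ y) % 2 = 0) :=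
    fun {x y} p => walk_parity hbip hstep₀ p
  have hbnd : ∀ v : V, f₀ none - f₀ (some v) ≤ 1 ∧ f₀ (some v) - f₀ none ≤ 1 := fun v =>
    ⟨hb₀ _ _ (suspension_adj_none_some G v), hb₀ _ _ (suspension_adj_some_none G v)⟩
  -- characterization of V₂ in terms of f₀
  have hV₂ : ∀ v : V, some v ∈ V₂ ↔ (facetSubgraph (suspension G) f₀).Adj none (some v) := by
    intro v
    obtain ⟨p⟩ := hHpre none (some v)
    have h := hpar p
    have hd := hbnd v
    constructor
    · intro hv
      have hodd : ¬((f₀ none - f₀ (some v)) % 2 = 0) := by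
        intro h0
        exact hapex ((h.2 h0).2 hv)
      refine ⟨suspension_adj_none_some G v, ?_⟩
      have hcase : f₀ none - f₀ (some v) = 1 ∨ f₀ none - f₀ (some v) = -1 := by omega
      rcases hcase with h1 | h1 <;> rw [h1] <;> norm_num
    · rintro ⟨-, habs⟩
      have h1 := (abs_eq (by norm_num : (0:ℤ) ≤ 1)).mp habs
      have hodd : ¬((f₀ none - f₀ (some v)) % 2 = 0) := by rcases h1 with h1 | h1 <;> omega
      by_contra hnv
      exact hodd (h.1 (iff_of_false hapex hnv))
  have hval_out : ∀ v : V, some v ∉ V₂ → f₀ (some v) = f₀ none := by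
    intro v hv
    have hne1 : ¬|f₀ none - f₀ (some v)| = 1 := fun hh =>
      hv ((hV₂ v).2 ⟨suspension_adj_none_some G v, hh⟩)
    have hd := hbnd v
    have h3 : f₀ none - f₀ (some v) ≠ 1 := fun hh => hne1 (by rw [hh]; norm_num)
    have h4 : f₀ none - f₀ (some v) ≠ -1 := fun hh => hne1 (by rw [hh]; norm_num)
    omega
  have hval_in : ∀ v : V, some v ∈ V₂ →
      f₀ (some v) - f₀ none = 1 ∨ f₀ (some v) - f₀ none = -1 := by
    intro v hv
    obtain ⟨-, habs⟩ := (hV₂ v).1 hv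
    have h1 := (abs_eq (by norm_num : (0:ℤ) ≤ 1)).mp habs
    omega
  -- V₂ is nonempty
  obtain ⟨i, j, hHij⟩ := exists_facetSubgraph_adj hpre hf₀
  obtain ⟨v₁, hv₁⟩ : ∃ v : V, some v ∈ V₂ := by
    have hmem : ∃ x : Option V, x ∈ V₂ := by
      rcases hbip i j hHij with ⟨h1, -⟩ | ⟨-, h1⟩
      exacts [⟨i, h1⟩, ⟨j, h1⟩]
    obtain ⟨x, hx⟩ := hmem
    cases x with
    | none => exact absurd hx hapex
    | some v => exact ⟨v, hx⟩
  -- characterization of edges between non-apex vertices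
  have hsome : ∀ u v : V, (facetSubgraph (suspension G) f₀).Adj (some u) (some v)
      ↔ (G.Adj u v ∧ ¬((some u ∈ V₂) ↔ (some v ∈ V₂))) := by
    intro u v
    constructor
    · intro h
      refine ⟨h.1, ?_⟩
      rcases hbip _ _ h with ⟨h1, h2⟩ | ⟨h1, h2⟩ <;> simp [h1, h2]
    · rintro ⟨hadj, hmix⟩
      refine ⟨hadj, ?_⟩
      by_cases hu : some u ∈ V₂ <;> by_cases hv : some v ∈ V₂
      · exact absurd (iff_of_true hu hv) hmix
      · rw [hval_out v hv]
        rcases hval_in u hu with h1 | h1 <;> rw [h1] <;> norm_num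
      · rw [hval_out u hu]
        have h2 := hval_in v hv
        have h1 : f₀ none - f₀ (some v) = 1 ∨ f₀ none - f₀ (some v) = -1 := by omega
        rcases h1 with h1 | h1 <;> rw [h1] <;> norm_num
      · exact absurd (iff_of_false hu hv) hmix
  -- all sign choices give back the same facet subgraph
  have hfs_sig : ∀ σ : (G.induce V₂').ConnectedComponent → Bool,
      facetSubgraph (suspension G) (fsig G V₂' σ) = facetSubgraph (suspension G) f₀ := by
    intro σ
    ext x y
    cases x with
    | none =>
      cases y with
      | none =>
        constructor <;> (rintro ⟨h, -⟩; exact absurd h (by simp [suspension]))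
      | some v =>
        constructor
        · rintro ⟨-, habs⟩
          by_cases hv : v ∈ V₂'
          · exact (hV₂ v).1 hv
          · rw [fsig_none, fsig_not_mem G V₂' σ hv] at habs
            norm_num at habs
        · intro h
          have hv : v ∈ V₂' := (hV₂ v).2 h
          refine ⟨suspension_adj_none_some G v, ?_⟩
          rw [fsig_none, fsig_mem G V₂' σ hv]
          by_cases hσ : σ ((G.induce V₂').connectedComponentMk ⟨v, hv⟩) <;> simp [hσ]
    | some u =>
      cases y with
      | none =>
        constructor
        · rintro ⟨-, habs⟩
          by_cases hu : u ∈ V₂'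
          · exact ((hV₂ u).1 hu).symm
          · rw [fsig_none, fsig_not_mem G V₂' σ hu] at habs
            norm_num at habs
        · intro h
          have hu : u ∈ V₂' := (hV₂ u).2 h.symm
          refine ⟨suspension_adj_some_none G u, ?_⟩
          rw [fsig_none, fsig_mem G V₂' σ hu]
          by_cases hσ : σ ((G.induce V₂').connectedComponentMk ⟨u, hu⟩) <;> simp [hσ]
      | some v =>
        rw [hsome u v]
        constructor
        · rintro ⟨hadj, habs⟩
          have hadj' : G.Adj u v := hadj
          refine ⟨hadj', ?_⟩
          intro hiff
          by_cases hu : some u ∈ V₂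
          · have hv : some v ∈ V₂ := hiff.1 hu
            rw [fsig_eq_of_adj G V₂' σ hu hv hadj'] at habs
            norm_num at habs
          · have hv : some v ∉ V₂ := fun h => hu (hiff.2 h)
            rw [fsig_not_mem G V₂' σ hu, fsig_not_mem G V₂' σ hv] at habs
            norm_num at habs
        · rintro ⟨hadj, hmix⟩
          refine ⟨hadj, ?_⟩
          by_cases hu : some u ∈ V₂ <;> by_cases hv : some v ∈ V₂
          · exact absurd (iff_of_true hu hv) hmix
          · rw [fsig_mem G V₂' σ hu, fsig_not_mem G V₂' σ hv]
            by_cases hσ : σ ((G.induce V₂').connectedComponentMk ⟨u, hu⟩) <;> simp [hσ]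
          · rw [fsig_not_mem G V₂' σ hu, fsig_mem G V₂' σ hv]
            by_cases hσ : σ ((G.induce V₂').connectedComponentMk ⟨v, hv⟩) <;> simp [hσ]
          · exact absurd (iff_of_false hu hv) hmix
  -- each sign choice defines a facet
  have hdf_sig : ∀ σ : (G.induce V₂').ConnectedComponent → Bool,
      DefinesFacet (suspension G) (fsig G V₂' σ) := by
    intro σ
    have hb : ∀ i j : Option V, (suspension G).Adj i j →
        fsig G V₂' σ i - fsig G V₂' σ j ≤ 1 := by
      intro i j hij
      cases i with
      | none =>
        cases j with
        | none => exact absurd hij (by simp [suspension])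
        | some v =>
          rw [fsig_none]
          by_cases hv : v ∈ V₂'
          · rw [fsig_mem G V₂' σ hv]
            by_cases hσ : σ ((G.induce V₂').connectedComponentMk ⟨v, hv⟩) <;> simp [hσ]
          · rw [fsig_not_mem G V₂' σ hv]; norm_num
      | some u =>
        cases j with
        | none =>
          rw [fsig_none]
          by_cases hu : u ∈ V₂'
          · rw [fsig_mem G V₂' σ hu]
            by_cases hσ : σ ((G.induce V₂').connectedComponentMk ⟨u, hu⟩) <;> simp [hσ]
          · rw [fsig_not_mem G V₂' σ hu]; norm_num
        | some v =>
          have hadj : G.Adj u v := hij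
          by_cases hu : u ∈ V₂' <;> by_cases hv : v ∈ V₂'
          · rw [fsig_eq_of_adj G V₂' σ hu hv hadj]; omega
          · rw [fsig_mem G V₂' σ hu, fsig_not_mem G V₂' σ hv]
            by_cases hσ : σ ((G.induce V₂').connectedComponentMk ⟨u, hu⟩) <;> simp [hσ]
          · rw [fsig_not_mem G V₂' σ hu, fsig_mem G V₂' σ hv]
            by_cases hσ : σ ((G.induce V₂').connectedComponentMk ⟨v, hv⟩) <;> simp [hσ]
          · rw [fsig_not_mem G V₂' σ hu, fsig_not_mem G V₂' σ hv]; norm_num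
    have hconn : ∀ x y : Option V,
        (facetSubgraph (suspension G) (fsig G V₂' σ)).Reachable x y := by
      intro x y
      rw [hfs_sig σ]
      exact hHpre x y
    by_cases hσ : σ ((G.induce V₂').connectedComponentMk ⟨v₁, hv₁⟩)
    · refine definesFacet_of (suspension G) (fsig G V₂' σ) hb hconn (some v₁) none
        (suspension_adj_some_none G v₁) ?_
      rw [fsig_none, fsig_mem G V₂' σ hv₁, if_pos hσ]
      norm_num
    · refine definesFacet_of (suspension G) (fsig G V₂' σ) hb hconn none (some v₁)
        (suspension_adj_none_some G v₁) ?_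
      rw [fsig_none, fsig_mem G V₂' σ hv₁, if_neg hσ]
      norm_num
  -- the family of candidate facets
  set Φ : ((G.induce V₂').ConnectedComponent → Bool) → Set (Option V → ℝ) := fun σ =>
    {x ∈ symEdgePolytope (suspension G) |
      ∑ i : Option V, ((fsig G V₂' σ i : ℝ)) * x i = 1} with hΦ
  -- the set counted by mu equals the range of Φ
  have hset : {F : Set (Option V → ℝ) | ∃ f : Option V → ℤ,
        DefinesFacet (suspension G) f ∧
        F = {x ∈ symEdgePolytope (suspension G) | ∑ i : Option V, (f i : ℝ) * x i = 1} ∧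
        facetSubgraph (suspension G) f = facetSubgraph (suspension G) f₀}
      = Set.range Φ := by
    ext F
    constructor
    · rintro ⟨g, hgdef, rfl, hgfs⟩
      -- build the sign choice from g
      have hgb := int_diff_le_one_of_definesFacet hgdef
      have hgin : ∀ v : V, some v ∈ V₂ →
          g (some v) - g none = 1 ∨ g (some v) - g none = -1 := by
        intro v hv
        have h := (hV₂ v).1 hv
        rw [← hgfs] at h
        obtain ⟨-, habs⟩ := h
        have h1 := (abs_eq (by norm_num : (0:ℤ) ≤ 1)).mp habs
        omega
      have hgout : ∀ v : V, some v ∉ V₂ → g (some v) = g none := by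
        intro v hv
        have hne1 : ¬|g none - g (some v)| = 1 := by
          intro hh
          apply hv
          rw [hV₂ v, ← hgfs]
          exact ⟨suspension_adj_none_some G v, hh⟩
        have hd1 := hgb _ _ (suspension_adj_none_some G v)
        have hd2 := hgb _ _ (suspension_adj_some_none G v)
        have h3 : g none - g (some v) ≠ 1 := fun hh => hne1 (by rw [hh]; norm_num)
        have h4 : g none - g (some v) ≠ -1 := fun hh => hne1 (by rw [hh]; norm_num)
        omega
      have hgadj_eq : ∀ p q : V₂', (G.induce V₂').Adj p q → g (some p.1) = g (some q.1) := by
        intro p q hpq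
        have hadj : G.Adj p.1 q.1 := hpq
        have hd1 := hgb _ _ ((suspension_adj_some_some G p.1 q.1).2 hadj)
        have hd2 := hgb _ _ ((suspension_adj_some_some G q.1 p.1).2 hadj.symm)
        have h1 := hgin p.1 p.2
        have h2 := hgin q.1 q.2
        omega
      have hlift : ∀ (p q : V₂') (w : (G.induce V₂').Walk p q), w.IsPath →
          decide (g (some p.1) - g none = 1) = decide (g (some q.1) - g none = 1) := by
        intro p q w hw
        have := walk_const hgadj_eq w
        rw [this]
      set σg : (G.induce V₂').ConnectedComponent → Bool :=
        SimpleGraph.ConnectedComponent.lift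
          (fun p : V₂' => decide (g (some p.1) - g none = 1)) hlift with hσg
      have hpoint : ∀ k : Option V, g k = fsig G V₂' σg k + g none := by
        intro k
        cases k with
        | none => rw [fsig_none]; ring
        | some v =>
          by_cases hv : v ∈ V₂'
          · rw [fsig_mem G V₂' σg hv]
            have hmkv : σg ((G.induce V₂').connectedComponentMk ⟨v, hv⟩)
                = decide (g (some v) - g none = 1) := rfl
            rw [hmkv]
            rcases hgin v hv with h1 | h1
            · rw [decide_eq_true h1, if_pos rfl]
              omega
            · have hne : ¬(g (some v) - g none = 1) := by omega
              rw [decide_eq_false hne]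
              simp only [Bool.false_eq_true, if_false]
              omega
          · rw [fsig_not_mem G V₂' σg hv, hgout v hv]
            ring
      refine ⟨σg, ?_⟩
      have hsum_eq : ∀ x ∈ symEdgePolytope (suspension G),
          (∑ i : Option V, (g i : ℝ) * x i)
            = ∑ i : Option V, ((fsig G V₂' σg i : ℝ)) * x i := by
        intro x hx
        have hterm : ∀ k : Option V, ((g k : ℝ)) = ((fsig G V₂' σg k : ℝ)) + (g none : ℝ) := by
          intro k
          have := hpoint k
          exact_mod_cast congrArg (fun t : ℤ => (t : ℝ)) this
        calc ∑ i : Option V, (g i : ℝ) * x i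
            = ∑ i : Option V, (((fsig G V₂' σg i : ℝ)) * x i + (g none : ℝ) * x i) := by
              apply Finset.sum_congr rfl
              intro k _
              rw [hterm k]
              ring
          _ = (∑ i : Option V, ((fsig G V₂' σg i : ℝ)) * x i)
              + (g none : ℝ) * ∑ i : Option V, x i := by
              rw [Finset.sum_add_distrib, Finset.mul_sum]
          _ = ∑ i : Option V, ((fsig G V₂' σg i : ℝ)) * x i := by
              rw [sum_zero_of_mem hx]
              ring
      show {x ∈ symEdgePolytope (suspension G) |
          ∑ i : Option V, ((fsig G V₂' σg i : ℝ)) * x i = 1}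
        = {x ∈ symEdgePolytope (suspension G) | ∑ i : Option V, (g i : ℝ) * x i = 1}
      ext x
      constructor
      · rintro ⟨hxP, hx1⟩
        exact ⟨hxP, by rw [hsum_eq x hxP]; exact hx1⟩
      · rintro ⟨hxP, hx1⟩
        exact ⟨hxP, by rw [← hsum_eq x hxP]; exact hx1⟩
    · rintro ⟨σ, rfl⟩
      exact ⟨fsig G V₂' σ, hdf_sig σ, rfl, hfs_sig σ⟩
  -- Φ is injective
  have hinj : Function.Injective Φ := by
    intro σ τ hστ
    funext c
    obtain ⟨p, rfl⟩ := Quot.exists_rep c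
    have hmem : ∀ ρ : (G.induce V₂').ConnectedComponent → Bool,
        evtx (some p.1) none ∈ Φ ρ ↔ ρ ((G.induce V₂').connectedComponentMk p) = true := by
      intro ρ
      have hadj : (suspension G).Adj (some p.1) none := suspension_adj_some_none G p.1
      have hval : (∑ i : Option V, ((fsig G V₂' ρ i : ℝ)) * (evtx (some p.1) none) i)
          = ((fsig G V₂' ρ (some p.1) - fsig G V₂' ρ none : ℤ) : ℝ) := by
        rw [← lmap_int_evtx (fsig G V₂' ρ) (by simp : (some p.1 : Option V) ≠ none)]
        rfl
      constructor
      · rintro ⟨-, h1⟩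
        rw [hval] at h1
        have h2 : fsig G V₂' ρ (some p.1) - fsig G V₂' ρ none = 1 := by exact_mod_cast h1
        rw [fsig_none, fsig_mem G V₂' ρ p.2] at h2
        by_cases hρ : ρ ((G.induce V₂').connectedComponentMk ⟨p.1, p.2⟩)
        · rw [show ((G.induce V₂').connectedComponentMk p)
            = ((G.induce V₂').connectedComponentMk ⟨p.1, p.2⟩) from rfl]
          exact hρ
        · rw [if_neg hρ] at h2
          omega
      · intro hρ
        refine ⟨evtx_mem_poly hadj, ?_⟩
        rw [hval, fsig_none, fsig_mem G V₂' ρ p.2]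
        rw [show ((G.induce V₂').connectedComponentMk ⟨p.1, p.2⟩)
          = ((G.induce V₂').connectedComponentMk p) from rfl, if_pos hρ]
        norm_num
    have h1 := hmem σ
    have h2 := hmem τ
    rw [hστ] at h1
    have h3 : σ ((G.induce V₂').connectedComponentMk p) = true
        ↔ τ ((G.induce V₂').connectedComponentMk p) = true := h1.symm.trans h2
    show σ ((G.induce V₂').connectedComponentMk p) = τ ((G.induce V₂').connectedComponentMk p)
    cases hσv : σ ((G.induce V₂').connectedComponentMk p) <;>
      cases hτv : τ ((G.induce V₂').connectedComponentMk p)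
    · rfl
    · exfalso
      have hc := h3.2 hτv
      rw [hσv] at hc
      simp at hc
    · exfalso
      have hc := h3.1 hσv
      rw [hτv] at hc
      simp at hc
    · rfl
  -- conclude by counting
  have hmu : mu (suspension G) (facetSubgraph (suspension G) f₀) = (Set.range Φ).ncard :=
    congrArg Set.ncard hset
  rw [hmu, ← Set.image_univ, Set.ncard_image_of_injective _ hinj, Set.ncard_univ]
  haveI : Finite (G.induce V₂').ConnectedComponent := Quot.finite _
  rw [Nat.card_fun]
  norm_num [Nat.card_eq_fintype_card]
end

section
/- Let G be a graph on the vertex set [n−1] with n ≥ 3, and let v be a vertex of G with N_G[v] ≠ [n−1]. Then N(P_{(G−v)^}) + N(P_{(G/v)^}) ≤ N(P_{Ĝ}) ≤ N(P_{(G−v)^}) + 2·N(P_{(G−N_G[v])^}) + N(P_{(G/v)^}), where (·)^ denotes suspension. -/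
set_option linter.unusedSectionVars false


open Finset

/-- The graph `G/v` obtained from `G` by deleting the vertex `v` and inserting all edges
`{i, j}` with `i, j ∈ N_G(v)`, `i ≠ j`. -/
def contractVertex {V : Type*} (G : SimpleGraph V) (v : V) : SimpleGraph {u : V // u ≠ v} where
  Adj a b := a ≠ b ∧ ((G.Adj a b) ∨ (G.Adj v a ∧ G.Adj v b))
  symm := by
    constructor
    rintro a b ⟨hab, h⟩
    exact ⟨hab.symm, h.imp (fun h' => h'.symm) (fun h' => ⟨h'.2, h'.1⟩)⟩
  loopless := ⟨fun a h => h.1 rfl⟩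


namespace SEPAux

open Finset

def BSet {W : Type*} (H : SimpleGraph W) : Set (W → ℤ) :=
  {β | (∀ u, |β u| ≤ 1) ∧ (∀ u w, H.Adj u w → |β u - β w| ≤ 1) ∧ β ≠ 0 ∧
       (∀ u, β u = 0 → ∃ w, H.Adj u w ∧ β w ≠ 0)}

section Geometry

variable {W : Type*} [Fintype W] [DecidableEq W]

noncomputable def lmap (c : Option W → ℝ) : (Option W → ℝ) →L[ℝ] ℝ :=
  ∑ o : Option W, c o • (ContinuousLinearMap.proj o :
    ((Option W → ℝ)) →L[ℝ] ℝ)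

lemma lmap_apply (c x : Option W → ℝ) : lmap c x = ∑ o : Option W, c o * x o := by
  simp [lmap, ContinuousLinearMap.sum_apply]

def unitv (i : Option W) : Option W → ℝ := fun k => if k = i then 1 else 0

lemma lmap_unitv (c : Option W → ℝ) (i : Option W) : lmap c (unitv i) = c i := by
  rw [lmap_apply]
  simp [unitv, mul_ite]

lemma lmap_gen (c : Option W → ℝ) (i j : Option W) :
    lmap c (unitv i - unitv j) = c i - c j := by
  rw [map_sub, lmap_unitv, lmap_unitv]

lemma clm_eq_lmap (l : (Option W → ℝ) →L[ℝ] ℝ) (x : Option W → ℝ) :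
    l x = lmap (fun o => l (unitv o)) x := by
  rw [lmap_apply]
  conv_lhs => rw [pi_eq_sum_univ x, map_sum]
  refine Finset.sum_congr rfl fun o _ => ?_
  rw [map_smul]
  have : (fun j => if o = j then (1:ℝ) else 0) = unitv o := by
    funext j; simp [unitv, eq_comm]
  rw [this, smul_eq_mul, mul_comm]

/-- The generators of the symmetric edge polytope of the suspension. -/
def gens (H : SimpleGraph W) : Set (Option W → ℝ) :=
  {x | ∃ i j, (suspension H).Adj i j ∧ x = unitv i - unitv j}

lemma symEdgePolytope_eq (H : SimpleGraph W) :
    symEdgePolytope (suspension H) = convexHull ℝ (gens H) := by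
  have : {x : Option W → ℝ | ∃ i j : Option W, (suspension H).Adj i j ∧
      x = fun k => (if k = i then (1 : ℝ) else 0) - (if k = j then (1 : ℝ) else 0)} = gens H := by
    ext x
    refine exists_congr fun i => exists_congr fun j => and_congr_right fun _ => ?_
    constructor <;> intro h <;> (rw [h]; rfl)
  rw [symEdgePolytope, this]

lemma gens_subset_P (H : SimpleGraph W) :
    gens H ⊆ symEdgePolytope (suspension H) := by
  rw [symEdgePolytope_eq]; exact subset_convexHull ℝ _

lemma neg_mem_gens {H : SimpleGraph W} {s : Option W → ℝ} (hs : s ∈ gens H) : -s ∈ gens H := by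
  obtain ⟨i, j, hij, rfl⟩ := hs
  exact ⟨j, i, hij.symm, by abel⟩

lemma le_on_P {H : SimpleGraph W} {c : Option W → ℝ} {m : ℝ}
    (h : ∀ s ∈ gens H, lmap c s ≤ m) :
    ∀ x ∈ symEdgePolytope (suspension H), lmap c x ≤ m := by
  rw [symEdgePolytope_eq]
  intro x hx
  have hconv : Convex ℝ {x : Option W → ℝ | lmap c x ≤ m} :=
    convex_halfSpace_le ⟨fun a b => map_add _ a b, fun r a => map_smul _ r a⟩ m
  exact convexHull_min h hconv hx

lemma sum_coords_eq_zero {H : SimpleGraph W} :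
    ∀ x ∈ symEdgePolytope (suspension H), ∑ o : Option W, x o = 0 := by
  rw [symEdgePolytope_eq]
  intro x hx
  have hconv : Convex ℝ {x : Option W → ℝ | lmap (fun _ => 1) x = 0} :=
    convex_hyperplane ⟨fun a b => map_add _ a b, fun r a => map_smul _ r a⟩ 0
  have h0 : ∀ s ∈ gens H, lmap (fun _ => (1:ℝ)) s = 0 := by
    rintro s ⟨i, j, hij, rfl⟩
    rw [lmap_gen]; ring
  have h2 : (lmap fun _ => (1:ℝ)) x = 0 := convexHull_min h0 hconv hx
  rw [lmap_apply] at h2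
  simpa using h2

lemma zero_mem_P [Nonempty W] (H : SimpleGraph W) :
    (0 : Option W → ℝ) ∈ symEdgePolytope (suspension H) := by
  obtain ⟨u⟩ := (inferInstance : Nonempty W)
  have hs : unitv (some u) - unitv none ∈ gens H := ⟨some u, none, trivial, rfl⟩
  have h1 : unitv (some u) - unitv none ∈ symEdgePolytope (suspension H) := gens_subset_P H hs
  have h2 : -(unitv (some u) - unitv none) ∈ symEdgePolytope (suspension H) :=
    gens_subset_P H (neg_mem_gens hs)
  have hconv : Convex ℝ (symEdgePolytope (suspension H)) := by
    rw [symEdgePolytope_eq]; exact convex_convexHull ℝ _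
  have h3 := hconv h1 h2 (by norm_num : (0:ℝ) ≤ 1/2) (by norm_num : (0:ℝ) ≤ 1/2)
    (by norm_num : (1:ℝ)/2 + 1/2 = 1)
  have h4 : (1/2 : ℝ) • (unitv (some u) - unitv none) +
      (1/2 : ℝ) • -(unitv (some u) - unitv none) = 0 := by
    rw [smul_neg]; abel
  rwa [h4] at h3

/-- Membership in the polytope gives a convex combination of generators. -/
lemma exists_rep {H : SimpleGraph W} {x : Option W → ℝ}
    (hx : x ∈ symEdgePolytope (suspension H)) :
    ∃ (ι : Type) (t : Finset ι) (w : ι → ℝ) (z : ι → Option W → ℝ),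
      (∀ i ∈ t, 0 ≤ w i) ∧ ∑ i ∈ t, w i = 1 ∧ (∀ i ∈ t, z i ∈ gens H) ∧
      ∑ i ∈ t, w i • z i = x := by
  rw [symEdgePolytope_eq, _root_.convexHull_eq] at hx
  obtain ⟨ι, t, w, z, h0, h1, hz, hx⟩ := hx
  exact ⟨ι, t, w, z, h0, h1, hz, by rwa [Finset.centerMass_eq_of_sum_1 _ _ h1] at hx⟩

lemma argmax_support {l : (Option W → ℝ) →L[ℝ] ℝ} {m : ℝ} {H : SimpleGraph W}
    (hle : ∀ s ∈ gens H, l s ≤ m) {ι : Type} {t : Finset ι} {w : ι → ℝ}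
    {z : ι → Option W → ℝ} (h0 : ∀ i ∈ t, 0 ≤ w i) (h1 : ∑ i ∈ t, w i = 1)
    (hz : ∀ i ∈ t, z i ∈ gens H) (hm : l (∑ i ∈ t, w i • z i) = m) :
    ∀ i ∈ t, w i ≠ 0 → l (z i) = m := by
  have hsum : ∑ i ∈ t, w i * (m - l (z i)) = 0 := by
    have : ∑ i ∈ t, w i * l (z i) = m := by
      rw [← hm, map_sum]; exact Finset.sum_congr rfl fun i _ => by rw [map_smul, smul_eq_mul]
    calc ∑ i ∈ t, w i * (m - l (z i)) = (∑ i ∈ t, w i) * m - ∑ i ∈ t, w i * l (z i) := by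
          rw [Finset.sum_mul, ← Finset.sum_sub_distrib]
          exact Finset.sum_congr rfl fun i _ => by ring
      _ = 0 := by rw [h1, this]; ring
  intro i hi hwi
  have hterm := (Finset.sum_eq_zero_iff_of_nonneg (fun j hj =>
    mul_nonneg (h0 j hj) (sub_nonneg.mpr (hle _ (hz j hj))))).mp hsum i hi
  rcases mul_eq_zero.mp hterm with h | h
  · exact absurd h hwi
  · linarith [sub_eq_zero.mp h]

end Geometry

section Geometry2

variable {W : Type*} [Fintype W] [DecidableEq W]

/-- Coefficients of the facet functional attached to a labeling `β`. -/
def cf (β : W → ℤ) : Option W → ℝ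
  | none => 0
  | some u => (β u : ℝ)

@[simp] lemma cf_none (β : W → ℤ) : cf β none = 0 := rfl
@[simp] lemma cf_some (β : W → ℤ) (u : W) : cf β (some u) = (β u : ℝ) := rfl

@[simp] lemma susp_adj_some_some {H : SimpleGraph W} {a b : W} :
    (suspension H).Adj (some a) (some b) ↔ H.Adj a b := Iff.rfl

lemma susp_adj_some_none {H : SimpleGraph W} (a : W) :
    (suspension H).Adj (some a) none := trivial

lemma susp_adj_none_some {H : SimpleGraph W} (a : W) :
    (suspension H).Adj none (some a) := trivial

/-- The candidate facet attached to a labeling `β`. -/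
def Fface (H : SimpleGraph W) (β : W → ℤ) : Set (Option W → ℝ) :=
  {x | x ∈ symEdgePolytope (suspension H) ∧ lmap (cf β) x = 1}

lemma bound_on_gens {H : SimpleGraph W} {β : W → ℤ} (hβ : β ∈ BSet H) :
    ∀ s ∈ gens H, lmap (cf β) s ≤ 1 := by
  rintro s ⟨i, j, hij, rfl⟩
  rw [lmap_gen]
  match i, j with
  | some u, some w =>
    have h := hβ.2.1 u w hij
    have : (β u : ℝ) - (β w : ℝ) ≤ 1 := by exact_mod_cast (abs_le.mp h).2
    simpa using this
  | some u, none =>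
    have h := hβ.1 u
    have : (β u : ℝ) ≤ 1 := by exact_mod_cast (abs_le.mp h).2
    simpa using this
  | none, some w =>
    have h := hβ.1 w
    have : (-1 : ℝ) ≤ (β w : ℝ) := by exact_mod_cast (abs_le.mp h).1
    simp only [cf_none, cf_some]
    linarith
  | none, none => exact absurd hij (by simp)

lemma exists_sat_gen {H : SimpleGraph W} {β : W → ℤ} (hβ : β ∈ BSet H) :
    ∃ s ∈ gens H, lmap (cf β) s = 1 := by
  obtain ⟨u, hu⟩ := Function.ne_iff.mp hβ.2.2.1
  have hb := hβ.1 u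
  have : β u = 1 ∨ β u = -1 := by
    rcases abs_le.mp hb with ⟨h1, h2⟩
    rcases lt_trichotomy (β u) 0 with h | h | h
    · right; omega
    · exact absurd h hu
    · left; omega
  rcases this with h | h
  · refine ⟨unitv (some u) - unitv none, ⟨some u, none, susp_adj_some_none u, rfl⟩, ?_⟩
    rw [lmap_gen]; simp [h]
  · refine ⟨unitv none - unitv (some u), ⟨none, some u, susp_adj_none_some u, rfl⟩, ?_⟩
    rw [lmap_gen]; simp [h]

lemma Fface_nonempty {H : SimpleGraph W} {β : W → ℤ} (hβ : β ∈ BSet H) :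
    (Fface H β).Nonempty := by
  obtain ⟨s, hs, h1⟩ := exists_sat_gen hβ
  exact ⟨s, gens_subset_P H hs, h1⟩

lemma Fface_eq_argmax {H : SimpleGraph W} {β : W → ℤ} (hβ : β ∈ BSet H) :
    Fface H β = {x ∈ symEdgePolytope (suspension H) |
      ∀ y ∈ symEdgePolytope (suspension H), lmap (cf β) y ≤ lmap (cf β) x} := by
  ext x
  constructor
  · rintro ⟨hxP, hx1⟩
    exact ⟨hxP, fun y hy => by rw [hx1]; exact le_on_P (bound_on_gens hβ) y hy⟩
  · rintro ⟨hxP, hmax⟩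
    refine ⟨hxP, le_antisymm (le_on_P (bound_on_gens hβ) x hxP) ?_⟩
    obtain ⟨s, hs, h1⟩ := exists_sat_gen hβ
    rw [← h1]
    exact hmax s (gens_subset_P H hs)

lemma Fface_exposed {H : SimpleGraph W} {β : W → ℤ} (hβ : β ∈ BSet H) :
    IsExposed ℝ (symEdgePolytope (suspension H)) (Fface H β) :=
  fun _ => ⟨lmap (cf β), Fface_eq_argmax hβ⟩

lemma Fface_ne_P [Nonempty W] {H : SimpleGraph W} (β : W → ℤ) :
    Fface H β ≠ symEdgePolytope (suspension H) := by
  intro h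
  have h0 : (0 : Option W → ℝ) ∈ Fface H β := h ▸ zero_mem_P H
  have := h0.2
  rw [map_zero] at this
  norm_num at this

lemma Fface_maximal [Nonempty W] {H : SimpleGraph W} {β : W → ℤ} (hβ : β ∈ BSet H)
    (F' : Set (Option W → ℝ)) (hexp : IsExposed ℝ (symEdgePolytope (suspension H)) F')
    (hne : F' ≠ symEdgePolytope (suspension H)) (hsub : Fface H β ⊆ F') :
    F' = Fface H β := by
  obtain ⟨l, hl⟩ := hexp ((Fface_nonempty hβ).mono hsub)
  obtain ⟨s₀, hs₀g, hs₀1⟩ := exists_sat_gen hβ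
  have hs₀F : s₀ ∈ F' := hsub ⟨gens_subset_P H hs₀g, hs₀1⟩
  set γ : Option W → ℝ := fun o => l (unitv o) with hγ
  set m : ℝ := l s₀ with hm
  -- all elements of F' have the same value m
  have hargmax : ∀ x ∈ F', l x = m := by
    intro x hx
    rw [hl] at hx hs₀F
    exact le_antisymm (hs₀F.2 x hx.1) (hx.2 s₀ hs₀F.1)
  have hleP : ∀ y ∈ symEdgePolytope (suspension H), l y ≤ m := by
    intro y hy
    rw [hl] at hs₀F
    exact hs₀F.2 y hy
  -- saturated generators take value m
  have hsatF : ∀ s ∈ gens H, lmap (cf β) s = 1 → l s = m := fun s hs h1 =>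
    hargmax s (hsub ⟨gens_subset_P H hs, h1⟩)
  have hlgen : ∀ i j : Option W, l (unitv i - unitv j) = γ i - γ j := by
    intro i j
    rw [clm_eq_lmap l (unitv i - unitv j), lmap_gen]
  -- first: key values on nonzero vertices
  have key1 : ∀ u : W, β u ≠ 0 → γ (some u) = γ none + m * (β u : ℝ) := by
    intro u hu
    have hb := hβ.1 u
    have : β u = 1 ∨ β u = -1 := by rcases abs_le.mp hb with ⟨h1, h2⟩; omega
    rcases this with h | h
    · have hsat : l (unitv (some u) - unitv none) = m := by
        refine hsatF _ ⟨some u, none, susp_adj_some_none u, rfl⟩ ?_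
        rw [lmap_gen]; simp [h]
      rw [hlgen] at hsat
      rw [h]; push_cast; linarith
    · have hsat : l (unitv none - unitv (some u)) = m := by
        refine hsatF _ ⟨none, some u, susp_adj_none_some u, rfl⟩ ?_
        rw [lmap_gen]; simp [h]
      rw [hlgen] at hsat
      rw [h]; push_cast; linarith
  have key : ∀ u : W, γ (some u) = γ none + m * (β u : ℝ) := by
    intro u
    by_cases hu : β u = 0
    · obtain ⟨w, hadj, hw⟩ := hβ.2.2.2 u hu
      have hbw := hβ.1 w
      have hw' : β w = 1 ∨ β w = -1 := by rcases abs_le.mp hbw with ⟨h1, h2⟩; omega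
      have hkw := key1 w hw
      rcases hw' with h | h
      · have hsat : l (unitv (some w) - unitv (some u)) = m := by
          refine hsatF _ ⟨some w, some u, hadj.symm, rfl⟩ ?_
          rw [lmap_gen]; simp [h, hu]
        rw [hlgen] at hsat
        rw [h] at hkw
        rw [hu]; push_cast at hkw ⊢; linarith
      · have hsat : l (unitv (some u) - unitv (some w)) = m := by
          refine hsatF _ ⟨some u, some w, hadj, rfl⟩ ?_
          rw [lmap_gen]; simp [h, hu]
        rw [hlgen] at hsat
        rw [h] at hkw
        rw [hu]; push_cast at hkw ⊢; linarith
    · exact key1 u hu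
  -- l = m * lβ on P
  have hlx : ∀ x ∈ symEdgePolytope (suspension H), l x = m * lmap (cf β) x := by
    intro x hx
    have h1 : l x = ∑ o : Option W, γ o * x o := by rw [clm_eq_lmap l x, lmap_apply]
    have h2 : ∀ o : Option W, γ o = γ none + m * cf β o := by
      intro o
      match o with
      | none => simp
      | some u => rw [cf_some]; exact key u
    calc l x = ∑ o : Option W, (γ none + m * cf β o) * x o := by
          rw [h1]; exact Finset.sum_congr rfl fun o _ => by rw [← h2 o]
      _ = γ none * (∑ o : Option W, x o) + m * ∑ o : Option W, cf β o * x o := by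
          rw [Finset.mul_sum, Finset.mul_sum, ← Finset.sum_add_distrib]
          exact Finset.sum_congr rfl fun o _ => by ring
      _ = m * lmap (cf β) x := by
          rw [sum_coords_eq_zero x hx, lmap_apply]; ring
  -- m > 0
  have hm0 : 0 < m := by
    have hns₀ : -s₀ ∈ gens H := neg_mem_gens hs₀g
    have : l (-s₀) ≤ m := hleP _ (gens_subset_P H hns₀)
    rw [map_neg] at this
    have hm_nonneg : 0 ≤ m := by rw [hm] at this ⊢; linarith
    rcases hm_nonneg.lt_or_eq with h | h
    · exact h
    · exfalso
      apply hne
      ext x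
      rw [hl]
      constructor
      · exact fun hx => hx.1
      · intro hx
        refine ⟨hx, fun y hy => ?_⟩
        rw [hlx y hy, hlx x hx, ← h]
        ring_nf
        exact le_refl _
  -- F' = Fface
  ext x
  constructor
  · intro hx
    have hxP : x ∈ symEdgePolytope (suspension H) := by rw [hl] at hx; exact hx.1
    have hxm : l x = m := hargmax x hx
    rw [hlx x hxP] at hxm
    refine ⟨hxP, ?_⟩
    have : m * lmap (cf β) x = m * 1 := by rw [hxm]; ring
    exact mul_left_cancel₀ (ne_of_gt hm0) this
  · exact fun hx => hsub hx

lemma Fface_isFacet [Nonempty W] {H : SimpleGraph W} {β : W → ℤ} (hβ : β ∈ BSet H) :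
    IsFacet (symEdgePolytope (suspension H)) (Fface H β) :=
  ⟨Fface_exposed hβ, Fface_ne_P β, Fface_maximal hβ⟩

end Geometry2

section Geometry3

variable {W : Type*} [Fintype W] [DecidableEq W]

lemma mem_Fface_iff_one {H : SimpleGraph W} (β : W → ℤ) (u : W) :
    (unitv (some u) - unitv none) ∈ Fface H β ↔ β u = 1 := by
  constructor
  · rintro ⟨-, h1⟩
    rw [lmap_gen] at h1
    simp only [cf_some, cf_none, sub_zero] at h1
    exact_mod_cast h1
  · intro h
    refine ⟨gens_subset_P H ⟨some u, none, susp_adj_some_none u, rfl⟩, ?_⟩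
    rw [lmap_gen]; simp [h]

lemma mem_Fface_iff_negone {H : SimpleGraph W} (β : W → ℤ) (u : W) :
    (unitv none - unitv (some u)) ∈ Fface H β ↔ β u = -1 := by
  constructor
  · rintro ⟨-, h1⟩
    rw [lmap_gen] at h1
    simp only [cf_some, cf_none, zero_sub] at h1
    have : (β u : ℝ) = -1 := by linarith
    exact_mod_cast this
  · intro h
    refine ⟨gens_subset_P H ⟨none, some u, susp_adj_none_some u, rfl⟩, ?_⟩
    rw [lmap_gen]; simp [h]

lemma Fface_injOn (H : SimpleGraph W) : Set.InjOn (Fface H) (BSet H) := by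
  intro β hβ β' hβ' h
  funext u
  have e1 : β u = 1 ↔ β' u = 1 := by
    rw [← mem_Fface_iff_one (H := H) β u, ← mem_Fface_iff_one (H := H) β' u, h]
  have e2 : β u = -1 ↔ β' u = -1 := by
    rw [← mem_Fface_iff_negone (H := H) β u, ← mem_Fface_iff_negone (H := H) β' u, h]
  have b1 := abs_le.mp (hβ.1 u)
  have b2 := abs_le.mp (hβ'.1 u)
  omega

/-- `β'` preserves all generators saturated by `β`. -/
def Pres (H : SimpleGraph W) (β β' : W → ℤ) : Prop :=
  (∀ u, β u = 1 → β' u = 1) ∧ (∀ u, β u = -1 → β' u = -1) ∧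
    (∀ u w, H.Adj u w → β u - β w = 1 → β' u - β' w = 1)

lemma pres_refl (H : SimpleGraph W) (β : W → ℤ) : Pres H β β :=
  ⟨fun _ h => h, fun _ h => h, fun _ _ _ h => h⟩

lemma pres_trans {H : SimpleGraph W} {β₁ β₂ β₃ : W → ℤ} (h1 : Pres H β₁ β₂)
    (h2 : Pres H β₂ β₃) : Pres H β₁ β₃ :=
  ⟨fun u h => h2.1 u (h1.1 u h), fun u h => h2.2.1 u (h1.2.1 u h),
    fun u w ha h => h2.2.2 u w ha (h1.2.2 u w ha h)⟩

/-- Any admissible labeling can be completed to an element of `BSet` preserving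
saturated generators. -/
lemma complete (H : SimpleGraph W) :
    ∀ (n : ℕ) (β : W → ℤ), (univ.filter fun u => β u = 0).card ≤ n →
      (∀ u, |β u| ≤ 1) → (∀ u w, H.Adj u w → |β u - β w| ≤ 1) → β ≠ 0 →
      ∃ β' ∈ BSet H, Pres H β β' := by
  intro n
  induction n with
  | zero =>
    intro β hcard hb he hne
    refine ⟨β, ⟨hb, he, hne, fun u hu => ?_⟩, pres_refl H β⟩
    exfalso
    have : u ∈ univ.filter fun u => β u = 0 := by simp [hu]
    have := Finset.card_pos.mpr ⟨u, this⟩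
    omega
  | succ n ih =>
    intro β hcard hb he hne
    by_cases hgood : ∀ u, β u = 0 → ∃ w, H.Adj u w ∧ β w ≠ 0
    · exact ⟨β, ⟨hb, he, hne, hgood⟩, pres_refl H β⟩
    · push_neg at hgood
      obtain ⟨u, hu0, hbad⟩ := hgood
      set β₂ : W → ℤ := Function.update β u 1 with hβ₂
      have hval : ∀ w, w ≠ u → β₂ w = β w := fun w hw => Function.update_of_ne hw 1 β
      have hvalu : β₂ u = 1 := Function.update_self u 1 β
      have hnbr : ∀ w, H.Adj u w → β w = 0 := hbad
      have hb2 : ∀ w, |β₂ w| ≤ 1 := by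
        intro w
        by_cases hw : w = u
        · rw [hw, hvalu]; norm_num
        · rw [hval w hw]; exact hb w
      have he2 : ∀ a b, H.Adj a b → |β₂ a - β₂ b| ≤ 1 := by
        intro a b hab
        by_cases ha : a = u
        · have hbu : b ≠ u := fun h => H.loopless.irrefl u (by rwa [ha, h] at hab)
          have hb0 : β b = 0 := hnbr b (by rwa [ha] at hab)
          rw [ha, hvalu, hval b hbu, hb0]; norm_num
        · by_cases hbu : b = u
          · have ha0 : β a = 0 := hnbr a (by rw [hbu] at hab; exact hab.symm)
            rw [hbu, hvalu, hval a ha, ha0]; norm_num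
          · rw [hval a ha, hval b hbu]; exact he a b hab
      have hne2 : β₂ ≠ 0 := by
        intro h
        have := congrFun h u
        rw [hvalu] at this
        norm_num at this
      have hcard2 : (univ.filter fun w => β₂ w = 0).card ≤ n := by
        have hsub : (univ.filter fun w => β₂ w = 0) ⊆
            (univ.filter fun w => β w = 0).erase u := by
          intro w hw
          simp only [Finset.mem_filter, Finset.mem_univ, true_and] at hw
          have hwu : w ≠ u := by
            intro h; rw [h, hvalu] at hw; norm_num at hw
          rw [Finset.mem_erase]
          refine ⟨hwu, ?_⟩
          simp only [Finset.mem_filter, Finset.mem_univ, true_and]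
          rw [← hval w hwu]; exact hw
        have hmem : u ∈ univ.filter fun w => β w = 0 := by simp [hu0]
        calc (univ.filter fun w => β₂ w = 0).card
            ≤ ((univ.filter fun w => β w = 0).erase u).card := Finset.card_le_card hsub
          _ = (univ.filter fun w => β w = 0).card - 1 := Finset.card_erase_of_mem hmem
          _ ≤ n := by omega
      obtain ⟨β', hβ', hpres⟩ := ih β₂ hcard2 hb2 he2 hne2
      refine ⟨β', hβ', pres_trans ?_ hpres⟩
      refine ⟨?_, ?_, ?_⟩
      · intro w hw
        have hwu : w ≠ u := fun h => by rw [h, hu0] at hw; norm_num at hw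
        rw [← hval w hwu] at hw; exact hw ▸ rfl
      · intro w hw
        have hwu : w ≠ u := fun h => by rw [h, hu0] at hw; norm_num at hw
        rw [← hval w hwu] at hw; exact hw ▸ rfl
      · intro a b hab hsat
        have hau : a ≠ u := by
          intro h
          rw [h] at hab hsat
          have h1 := hnbr b hab
          rw [hu0, h1] at hsat
          norm_num at hsat
        have hbu2 : b ≠ u := by
          intro h
          rw [h] at hab hsat
          have h1 := hnbr a hab.symm
          rw [hu0, h1] at hsat
          norm_num at hsat
        rw [hval a hau, hval b hbu2]
        exact hsat
end Geometry3

section Geometry4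

variable {W : Type*} [Fintype W] [DecidableEq W]

lemma cf_zero : cf (0 : W → ℤ) = fun _ => (0:ℝ) := by
  funext o; match o with
  | none => rfl
  | some u => simp

lemma cf_sat_of_pres {H : SimpleGraph W} {β β' : W → ℤ} (hp : Pres H β β') :
    ∀ i j : Option W, (suspension H).Adj i j →
      cf β i - cf β j = 1 → cf β' i - cf β' j = 1 := by
  intro i j hij hsat
  match i, j with
  | some u, some w =>
    simp only [cf_some] at hsat ⊢
    have h : β u - β w = 1 := by exact_mod_cast hsat
    have := hp.2.2 u w hij h
    exact_mod_cast this
  | some u, none =>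
    simp only [cf_some, cf_none, sub_zero] at hsat ⊢
    have h : β u = 1 := by exact_mod_cast hsat
    exact_mod_cast hp.1 u h
  | none, some w =>
    simp only [cf_some, cf_none, zero_sub] at hsat ⊢
    have h : β w = -1 := by
      have : (β w : ℝ) = -1 := by linarith
      exact_mod_cast this
    have := hp.2.1 w h
    rw [this]; norm_num
  | none, none => exact absurd hij (by simp)

lemma isFacet_imp [Nonempty W] {H : SimpleGraph W} {F : Set (Option W → ℝ)}
    (hF : IsFacet (symEdgePolytope (suspension H)) F) :
    ∃ β ∈ BSet H, F = Fface H β := by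
  -- all-ones labeling
  have hβ₀ : (fun _ => (1:ℤ)) ∈ BSet H := by
    refine ⟨fun u => by norm_num, fun u w _ => by norm_num, ?_, fun u hu => by norm_num at hu⟩
    intro h
    obtain ⟨u⟩ := (inferInstance : Nonempty W)
    have := congrFun h u
    norm_num at this
  -- F is nonempty
  have hFne : F.Nonempty := by
    by_contra hne
    rw [Set.not_nonempty_iff_eq_empty] at hne
    have h2 := hF.2.2 (Fface H (fun _ => 1)) (Fface_exposed hβ₀) (Fface_ne_P _)
      (by rw [hne]; exact Set.empty_subset _)
    exact (Fface_nonempty hβ₀).ne_empty (h2.trans hne)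
  obtain ⟨l, hl⟩ := hF.1 hFne
  obtain ⟨x₀, hx₀⟩ := hFne
  have hx₀' := hx₀
  rw [hl] at hx₀'
  obtain ⟨hx₀P, hx₀max⟩ := hx₀'
  set γ : Option W → ℝ := fun o => l (unitv o) with hγ
  set m : ℝ := l x₀ with hmdef
  have hleP : ∀ y ∈ symEdgePolytope (suspension H), l y ≤ m := hx₀max
  have hlegen : ∀ s ∈ gens H, l s ≤ m := fun s hs => hleP s (gens_subset_P H hs)
  have hlgen : ∀ i j : Option W, l (unitv i - unitv j) = γ i - γ j := by
    intro i j
    rw [clm_eq_lmap l (unitv i - unitv j), lmap_gen]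
  -- an l-saturated generator exists
  obtain ⟨s₀, hs₀g, hs₀m⟩ : ∃ s ∈ gens H, l s = m := by
    obtain ⟨ι, t, w, z, h0, h1, hz, hsum⟩ := exists_rep hx₀P
    have hm' : l (∑ i ∈ t, w i • z i) = m := by rw [hsum]
    obtain ⟨i, hit, hwi⟩ : ∃ i ∈ t, w i ≠ 0 := by
      by_contra hc
      push_neg at hc
      rw [Finset.sum_eq_zero hc] at h1
      norm_num at h1
    exact ⟨z i, hz i hit, argmax_support hlegen h0 h1 hz hm' i hit hwi⟩
  -- m > 0
  have hm0 : 0 < m := by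
    have hns : l (-s₀) ≤ m := hlegen _ (neg_mem_gens hs₀g)
    rw [map_neg] at hns
    have hge : 0 ≤ m := by linarith [hs₀m]
    rcases hge.lt_or_eq with h | h
    · exact h
    · exfalso
      apply hF.2.1
      have hall0 : ∀ s ∈ gens H, l s = 0 := by
        intro s hs
        have h1 : l s ≤ 0 := h ▸ hlegen s hs
        have h2 : l (-s) ≤ 0 := h ▸ hlegen _ (neg_mem_gens hs)
        rw [map_neg] at h2
        linarith
      have hP0 : ∀ x ∈ symEdgePolytope (suspension H), l x = 0 := by
        rw [symEdgePolytope_eq]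
        intro x hx
        exact convexHull_min hall0
          (convex_hyperplane ⟨fun a b => map_add _ a b, fun r a => map_smul _ r a⟩ 0) hx
      rw [hl]
      ext x
      constructor
      · exact fun hx => hx.1
      · intro hx
        exact ⟨hx, fun y hy => by rw [hP0 y hy, hP0 x hx]⟩
  -- the rounded labeling
  set δ : W → ℝ := fun u => (γ (some u) - γ none) / m with hδ
  set β₁ : W → ℤ := fun u => ⌈δ u⌉ with hβ₁
  have hgenbound : ∀ i j : Option W, (suspension H).Adj i j → γ i - γ j ≤ m := by
    intro i j hij
    rw [← hlgen]
    exact hlegen _ ⟨i, j, hij, rfl⟩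
  have hδub : ∀ u, δ u ≤ 1 := by
    intro u
    rw [hδ, div_le_one hm0]
    simpa using hgenbound (some u) none (susp_adj_some_none u)
  have hδlb : ∀ u, -1 ≤ δ u := by
    intro u
    rw [hδ, le_div_iff₀ hm0]
    have := hgenbound none (some u) (susp_adj_none_some u)
    linarith
  have hδedge : ∀ u w, H.Adj u w → δ u - δ w ≤ 1 := by
    intro u w huw
    have h1 : γ (some u) - γ (some w) ≤ m := hgenbound _ _ huw
    rw [hδ]
    rw [div_sub_div_same, div_le_one hm0]
    linarith
  have hceil1 : ∀ u, β₁ u ≤ 1 := fun u =>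
    Int.ceil_le.mpr (by exact_mod_cast hδub u)
  have hceil2 : ∀ u, -1 ≤ β₁ u := by
    intro u
    have h := (hδlb u).trans (Int.le_ceil (δ u))
    exact_mod_cast h
  have hb1 : ∀ u, |β₁ u| ≤ 1 := fun u => abs_le.mpr ⟨hceil2 u, hceil1 u⟩
  have he1 : ∀ u w, H.Adj u w → |β₁ u - β₁ w| ≤ 1 := by
    intro u w huw
    rw [abs_le]
    constructor
    · have h := hδedge w u huw.symm
      have : β₁ w ≤ β₁ u + 1 := by
        have h2 : δ w ≤ δ u + 1 := by linarith
        calc β₁ w = ⌈δ w⌉ := rfl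
          _ ≤ ⌈δ u + 1⌉ := Int.ceil_le_ceil h2
          _ = ⌈δ u⌉ + 1 := by rw [Int.ceil_add_one]
      omega
    · have h := hδedge u w huw
      have : β₁ u ≤ β₁ w + 1 := by
        have h2 : δ u ≤ δ w + 1 := by linarith
        calc β₁ u = ⌈δ u⌉ := rfl
          _ ≤ ⌈δ w + 1⌉ := Int.ceil_le_ceil h2
          _ = ⌈δ w⌉ + 1 := by rw [Int.ceil_add_one]
      omega
  -- saturated generators of l are saturated for β₁
  have hsat1 : ∀ i j : Option W, (suspension H).Adj i j →
      l (unitv i - unitv j) = m → cf β₁ i - cf β₁ j = 1 := by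
    intro i j hij hsat
    rw [hlgen] at hsat
    match i, j with
    | some u, some w =>
      have hd : δ u = δ w + 1 := by
        rw [hδ]
        field_simp
        linarith
      have : β₁ u = β₁ w + 1 := by
        rw [hβ₁]
        simp only
        rw [hd, Int.ceil_add_one]
      simp only [cf_some]
      rw [this]; push_cast; ring
    | some u, none =>
      have hd : δ u = 1 := by
        rw [hδ]
        rw [div_eq_one_iff_eq (ne_of_gt hm0)]
        simpa using hsat
      have : β₁ u = 1 := by rw [hβ₁]; simp only; rw [hd, Int.ceil_one]
      simp [this]
    | none, some w =>
      have hd : δ w = -1 := by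
        rw [hδ]
        rw [div_eq_iff (ne_of_gt hm0)]
        linarith [hsat]
      have : β₁ w = -1 := by
        rw [hβ₁]; simp only; rw [hd]
        rw [show ((-1:ℝ)) = ((-1 : ℤ):ℝ) by norm_num, Int.ceil_intCast]
      simp [this]
    | none, none => exact absurd hij (by simp)
  -- β₁ ≠ 0
  obtain ⟨i₀, j₀, hij₀, hs₀eq⟩ := hs₀g
  have hsat₀ : cf β₁ i₀ - cf β₁ j₀ = 1 := by
    apply hsat1 i₀ j₀ hij₀
    rw [← hs₀eq]
    exact hs₀m
  have hne1 : β₁ ≠ 0 := by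
    intro h
    rw [h, cf_zero] at hsat₀
    norm_num at hsat₀
  -- complete to an element of BSet
  obtain ⟨β', hβ', hpres⟩ := complete H (Fintype.card W) β₁
    (by simpa using Finset.card_filter_le univ _) hb1 he1 hne1
  have hsat' : ∀ i j : Option W, (suspension H).Adj i j →
      l (unitv i - unitv j) = m → cf β' i - cf β' j = 1 := fun i j hij hs =>
    cf_sat_of_pres hpres i j hij (hsat1 i j hij hs)
  -- F ⊆ Fface H β'
  have hsub : F ⊆ Fface H β' := by
    intro x hx
    rw [hl] at hx
    obtain ⟨hxP, hxmax⟩ := hx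
    have hxm : l x = m := le_antisymm (hleP x hxP) (hxmax x₀ hx₀P)
    obtain ⟨ι, t, w, z, h0, h1, hz, hsum⟩ := exists_rep hxP
    have hm' : l (∑ i ∈ t, w i • z i) = m := by rw [hsum, hxm]
    refine ⟨hxP, ?_⟩
    have : lmap (cf β') x = ∑ i ∈ t, w i * lmap (cf β') (z i) := by
      rw [← hsum, map_sum]
      exact Finset.sum_congr rfl fun i _ => by rw [map_smul, smul_eq_mul]
    rw [this]
    have hterm : ∀ i ∈ t, w i * lmap (cf β') (z i) = w i := by
      intro i hit
      by_cases hwi : w i = 0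
      · rw [hwi]; ring
      · have hzm : l (z i) = m := argmax_support hlegen h0 h1 hz hm' i hit hwi
        obtain ⟨a, b, hab, hzeq⟩ := hz i hit
        have : lmap (cf β') (z i) = 1 := by
          rw [hzeq, lmap_gen]
          apply hsat' a b hab
          rw [← hzeq]
          exact hzm
        rw [this]; ring
    rw [Finset.sum_congr rfl hterm, h1]
  exact ⟨β', hβ', (hF.2.2 (Fface H β') (Fface_exposed hβ') (Fface_ne_P _) hsub).symm⟩

theorem numFacets_suspension [Nonempty W] (H : SimpleGraph W) :
    numFacets (symEdgePolytope (suspension H)) = (BSet H).ncard := by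
  have hset : {F : Set (Option W → ℝ) | IsFacet (symEdgePolytope (suspension H)) F}
      = Fface H '' BSet H := by
    ext F
    constructor
    · intro hF
      obtain ⟨β, hβ, rfl⟩ := isFacet_imp hF
      exact ⟨β, hβ, rfl⟩
    · rintro ⟨β, hβ, rfl⟩
      exact Fface_isFacet hβ
  rw [numFacets, hset, Set.ncard_image_of_injOn (Fface_injOn H)]

end Geometry4

section Combinatorics

variable {V : Type*} [Fintype V] [DecidableEq V]

lemma BSet_finite (H : SimpleGraph V) : (BSet H).Finite := by
  have hsub : BSet H ⊆ Set.pi Set.univ (fun _ : V => Set.Icc (-1 : ℤ) 1) := by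
    intro β hβ u _
    exact Set.mem_Icc.mpr (abs_le.mp (hβ.1 u))
  exact (Set.Finite.pi fun _ => Set.finite_Icc _ _).subset hsub

variable (G : SimpleGraph V) (v : V)

open Classical in
/-- Extension of a labeling of `G - v` to `G`. -/
noncomputable def phi1 (β' : ↥{u : V | u ≠ v} → ℤ) : V → ℤ := fun u =>
  if h : u = v then
    (if ∀ (w : V) (hw : w ≠ v), G.Adj v w → β' ⟨w, hw⟩ = 0 then 1 else 0)
  else β' ⟨u, h⟩

open Classical in
/-- Extension of a labeling of `G / v` to `G`. -/
noncomputable def phi2 (β'' : {u : V // u ≠ v} → ℤ) : V → ℤ := fun u =>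
  if h : u = v then
    (if ∃ (w : V) (hw : w ≠ v), G.Adj v w ∧ β'' ⟨w, hw⟩ = 1 then 1 else -1)
  else β'' ⟨u, h⟩

lemma phi1_apply_ne (β' : ↥{u : V | u ≠ v} → ℤ) {u : V} (h : u ≠ v) :
    phi1 G v β' u = β' ⟨u, h⟩ := dif_neg h

lemma phi2_apply_ne (β'' : {u : V // u ≠ v} → ℤ) {u : V} (h : u ≠ v) :
    phi2 G v β'' u = β'' ⟨u, h⟩ := dif_neg h

lemma phi1_mem (β' : ↥{u : V | u ≠ v} → ℤ) (hβ : β' ∈ BSet (G.induce {u : V | u ≠ v})) :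
    phi1 G v β' ∈ BSet G := by
  classical
  obtain ⟨hb, he, hne, hz⟩ := hβ
  have hval_v : phi1 G v β' v =
      (if ∀ (w : V) (hw : w ≠ v), G.Adj v w → β' ⟨w, hw⟩ = 0 then 1 else 0) := dif_pos rfl
  refine ⟨?_, ?_, ?_, ?_⟩
  · intro u
    by_cases h : u = v
    · rw [h, hval_v]
      split <;> norm_num
    · rw [phi1_apply_ne G v β' h]; exact hb _
  · intro a b hab
    by_cases ha : a = v
    · have hbv : b ≠ v := fun h => G.loopless.irrefl v (by rwa [ha, h] at hab)
      rw [ha, hval_v, phi1_apply_ne G v β' hbv]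
      by_cases hC : ∀ (w : V) (hw : w ≠ v), G.Adj v w → β' ⟨w, hw⟩ = 0
      · rw [if_pos hC, hC b hbv (by rwa [ha] at hab)]
        norm_num
      · rw [if_neg hC, zero_sub, abs_neg]
        exact hb ⟨b, hbv⟩
    · by_cases hbv : b = v
      · have hav : a ≠ v := ha
        rw [hbv, hval_v, phi1_apply_ne G v β' hav]
        by_cases hC : ∀ (w : V) (hw : w ≠ v), G.Adj v w → β' ⟨w, hw⟩ = 0
        · rw [if_pos hC, hC a hav (by rw [hbv] at hab; exact hab.symm)]
          norm_num
        · rw [if_neg hC, sub_zero]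
          exact hb ⟨a, hav⟩
      · rw [phi1_apply_ne G v β' ha, phi1_apply_ne G v β' hbv]
        exact he ⟨a, ha⟩ ⟨b, hbv⟩ hab
  · intro h
    apply hne
    funext x
    have := congrFun h ↑x
    rw [phi1_apply_ne G v β' x.2] at this
    simpa using this
  · intro u hu
    by_cases h : u = v
    · rw [h, hval_v] at hu
      by_cases hC : ∀ (w : V) (hw : w ≠ v), G.Adj v w → β' ⟨w, hw⟩ = 0
      · rw [if_pos hC] at hu; norm_num at hu
      · push_neg at hC
        obtain ⟨w, hw, hadj, hw0⟩ := hC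
        refine ⟨w, by rwa [h], ?_⟩
        rwa [phi1_apply_ne G v β' hw]
    · rw [phi1_apply_ne G v β' h] at hu
      obtain ⟨w, hadj, hw0⟩ := hz ⟨u, h⟩ hu
      refine ⟨↑w, hadj, ?_⟩
      rwa [phi1_apply_ne G v β' w.2]

lemma phi2_mem (β'' : {u : V // u ≠ v} → ℤ) (hβ : β'' ∈ BSet (contractVertex G v)) :
    phi2 G v β'' ∈ BSet G := by
  classical
  obtain ⟨hb, he, hne, hz⟩ := hβ
  have hval_v : phi2 G v β'' v =
      (if ∃ (w : V) (hw : w ≠ v), G.Adj v w ∧ β'' ⟨w, hw⟩ = 1 then 1 else -1) := dif_pos rfl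
  have hvne : phi2 G v β'' v ≠ 0 := by
    rw [hval_v]; split <;> norm_num
  refine ⟨?_, ?_, ?_, ?_⟩
  · intro u
    by_cases h : u = v
    · rw [h, hval_v]; split <;> norm_num
    · rw [phi2_apply_ne G v β'' h]; exact hb _
  · intro a b hab
    have key : ∀ c : V, G.Adj v c →
        |phi2 G v β'' v - phi2 G v β'' c| ≤ 1 := by
      intro c hadj
      have hcv : c ≠ v := fun h => G.loopless.irrefl v (h ▸ hadj)
      rw [hval_v, phi2_apply_ne G v β'' hcv]
      by_cases hD : ∃ (w : V) (hw : w ≠ v), G.Adj v w ∧ β'' ⟨w, hw⟩ = 1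
      · rw [if_pos hD]
        obtain ⟨w, hw, hadjw, hw1⟩ := hD
        by_cases hcw : c = w
        · subst hcw
          rw [hw1]; norm_num
        · have hne2 : (⟨c, hcv⟩ : {u : V // u ≠ v}) ≠ ⟨w, hw⟩ := by
            intro hcontra
            exact hcw (congrArg Subtype.val hcontra)
          have hGc : (contractVertex G v).Adj ⟨c, hcv⟩ ⟨w, hw⟩ :=
            show _ ∧ _ from ⟨hne2, Or.inr ⟨hadj, hadjw⟩⟩
          have h3 := he _ _ hGc
          rw [hw1] at h3
          rw [abs_sub_comm]
          exact h3
      · rw [if_neg hD]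
        push_neg at hD
        have hne1 : β'' ⟨c, hcv⟩ ≠ 1 := hD c hcv hadj
        have := hb ⟨c, hcv⟩
        rw [abs_le] at this ⊢
        omega
    by_cases ha : a = v
    · rw [ha]
      exact key b (by rwa [ha] at hab)
    · by_cases hbv : b = v
      · rw [hbv, abs_sub_comm]
        exact key a (by rw [hbv] at hab; exact hab.symm)
      · rw [phi2_apply_ne G v β'' ha, phi2_apply_ne G v β'' hbv]
        have hsne : (⟨a, ha⟩ : {u : V // u ≠ v}) ≠ ⟨b, hbv⟩ := by
          intro hcontra
          exact hab.ne (congrArg Subtype.val hcontra)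
        exact he _ _ (show _ ∧ _ from ⟨hsne, Or.inl hab⟩)
  · intro h
    exact hvne (by rw [h]; rfl)
  · intro u hu
    by_cases h : u = v
    · exact absurd (h ▸ hu) hvne
    · rw [phi2_apply_ne G v β'' h] at hu
      obtain ⟨w, hadj, hw0⟩ := hz ⟨u, h⟩ hu
      rcases (show _ ∧ _ from hadj).2 with hG | ⟨hvu, hvw⟩
      · refine ⟨↑w, hG, ?_⟩
        rwa [phi2_apply_ne G v β'' w.2]
      · exact ⟨v, hvu.symm, hvne⟩

lemma lower_bound (hG : True) :
    (BSet (G.induce {u : V | u ≠ v})).ncard + (BSet (contractVertex G v)).ncard ≤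
      (BSet G).ncard := by
  classical
  have himg1 : phi1 G v '' BSet (G.induce {u : V | u ≠ v}) ⊆ BSet G := by
    rintro x ⟨β', hβ', rfl⟩; exact phi1_mem G v β' hβ'
  have himg2 : phi2 G v '' BSet (contractVertex G v) ⊆ BSet G := by
    rintro x ⟨β'', hβ'', rfl⟩; exact phi2_mem G v β'' hβ''
  have hinj1 : Set.InjOn (phi1 G v) (BSet (G.induce {u : V | u ≠ v})) := by
    intro a ha b hb hab
    funext x
    have := congrFun hab ↑x
    rw [phi1_apply_ne G v a x.2, phi1_apply_ne G v b x.2] at this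
    exact this
  have hinj2 : Set.InjOn (phi2 G v) (BSet (contractVertex G v)) := by
    intro a ha b hb hab
    funext x
    have := congrFun hab ↑x
    rw [phi2_apply_ne G v a x.2, phi2_apply_ne G v b x.2] at this
    exact this
  have hdisj : Disjoint (phi1 G v '' BSet (G.induce {u : V | u ≠ v}))
      (phi2 G v '' BSet (contractVertex G v)) := by
    rw [Set.disjoint_left]
    rintro x ⟨β', hβ', rfl⟩ ⟨β'', hβ'', hx⟩
    have hv := congrFun hx v
    have hv1 : phi2 G v β'' v =
        (if ∃ (w : V) (hw : w ≠ v), G.Adj v w ∧ β'' ⟨w, hw⟩ = 1 then 1 else -1) := dif_pos rfl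
    have hv2 : phi1 G v β' v =
        (if ∀ (w : V) (hw : w ≠ v), G.Adj v w → β' ⟨w, hw⟩ = 0 then 1 else 0) := dif_pos rfl
    rw [hv1, hv2] at hv
    by_cases hC : ∀ (w : V) (hw : w ≠ v), G.Adj v w → β' ⟨w, hw⟩ = 0
    · rw [if_pos hC] at hv
      by_cases hD : ∃ (w : V) (hw : w ≠ v), G.Adj v w ∧ β'' ⟨w, hw⟩ = 1
      · obtain ⟨w, hw, hadj, hw1⟩ := hD
        have := congrFun hx w
        rw [phi2_apply_ne G v β'' hw, phi1_apply_ne G v β' hw] at this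
        rw [hC w hw hadj] at this
        rw [hw1] at this
        norm_num at this
      · rw [if_neg hD] at hv
        norm_num at hv
    · rw [if_neg hC] at hv
      split at hv <;> norm_num at hv
  have hfin : (BSet G).Finite := BSet_finite G
  calc (BSet (G.induce {u : V | u ≠ v})).ncard + (BSet (contractVertex G v)).ncard
      = (phi1 G v '' BSet (G.induce {u : V | u ≠ v})).ncard +
        (phi2 G v '' BSet (contractVertex G v)).ncard := by
        rw [Set.ncard_image_of_injOn hinj1, Set.ncard_image_of_injOn hinj2]
    _ = ((phi1 G v '' BSet (G.induce {u : V | u ≠ v})) ∪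
        (phi2 G v '' BSet (contractVertex G v))).ncard := by
        rw [Set.ncard_union_eq hdisj (hfin.subset himg1) (hfin.subset himg2)]
    _ ≤ (BSet G).ncard := Set.ncard_le_ncard (Set.union_subset himg1 himg2) hfin
end Combinatorics

section Upper

variable {V : Type*} [Fintype V] [DecidableEq V] (G : SimpleGraph V) (v : V)

lemma upper_bound (hNv : {u : V | u = v ∨ G.Adj v u} ≠ Set.univ) :
    (BSet G).ncard ≤ (BSet (G.induce {u : V | u ≠ v})).ncard +
      2 * (BSet (G.induce {u : V | ¬(u = v ∨ G.Adj v u)})).ncard +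
      (BSet (contractVertex G v)).ncard := by
  classical
  haveI : Fintype ↥{u : V | ¬(u = v ∨ G.Adj v u)} := Fintype.ofFinite _
  obtain ⟨u₀, hu₀⟩ := (Set.ne_univ_iff_exists_notMem _).mp hNv
  rw [Set.mem_setOf_eq] at hu₀
  push_neg at hu₀
  set Gd := G.induce {u : V | u ≠ v} with hGd
  set Gn := G.induce {u : V | ¬(u = v ∨ G.Adj v u)} with hGn
  set Gc := contractVertex G v with hGc
  set P0 : Set (V → ℤ) := {β ∈ BSet G | β v = 0} with hP0
  set Ppb : Set (V → ℤ) := {β ∈ BSet G | β v = 1 ∧ ∀ w, G.Adj v w → β w = 0} with hPpb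
  set Ppg : Set (V → ℤ) := {β ∈ BSet G | β v = 1 ∧ ∃ w, G.Adj v w ∧ β w ≠ 0} with hPpg
  set Pmb : Set (V → ℤ) := {β ∈ BSet G | β v = -1 ∧ ∀ w, G.Adj v w → β w = 0} with hPmb
  set Pmg : Set (V → ℤ) := {β ∈ BSet G | β v = -1 ∧ ∃ w, G.Adj v w ∧ β w ≠ 0} with hPmg
  have hfinG : (BSet G).Finite := BSet_finite G
  have hfin0 : P0.Finite := hfinG.subset (fun x hx => hx.1)
  have hfinpb : Ppb.Finite := hfinG.subset (fun x hx => hx.1)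
  have hfinpg : Ppg.Finite := hfinG.subset (fun x hx => hx.1)
  have hfinmb : Pmb.Finite := hfinG.subset (fun x hx => hx.1)
  have hfinmg : Pmg.Finite := hfinG.subset (fun x hx => hx.1)
  -- the cover
  have hcover : BSet G ⊆ P0 ∪ Ppb ∪ Ppg ∪ Pmb ∪ Pmg := by
    intro β hβ
    have hb := abs_le.mp (hβ.1 v)
    have hv3 : β v = -1 ∨ β v = 0 ∨ β v = 1 := by omega
    by_cases hall : ∀ w, G.Adj v w → β w = 0
    · rcases hv3 with h | h | h
      · exact Or.inl (Or.inr ⟨hβ, h, hall⟩)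
      · exact Or.inl (Or.inl (Or.inl (Or.inl ⟨hβ, h⟩)))
      · exact Or.inl (Or.inl (Or.inl (Or.inr ⟨hβ, h, hall⟩)))
    · push_neg at hall
      rcases hv3 with h | h | h
      · exact Or.inr ⟨hβ, h, hall⟩
      · exact Or.inl (Or.inl (Or.inl (Or.inl ⟨hβ, h⟩)))
      · exact Or.inl (Or.inl (Or.inr ⟨hβ, h, hall⟩))
  -- restriction maps
  set res : (V → ℤ) → (↥{u : V | u ≠ v} → ℤ) := fun β x => β ↑x with hres
  set resc : (V → ℤ) → ({u : V // u ≠ v} → ℤ) := fun β x => β ↑x with hresc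
  set resn : (V → ℤ) → (↥{u : V | ¬(u = v ∨ G.Adj v u)} → ℤ) := fun β x => β ↑x with hresn
  -- (A) P0 injects into BSet Gd
  have hA : P0.ncard ≤ (BSet Gd).ncard := by
    have hinj : Set.InjOn res P0 := by
      intro a ha b hb hab
      funext u
      by_cases h : u = v
      · rw [h, ha.2, hb.2]
      · exact congrFun hab ⟨u, h⟩
    have himg : res '' P0 ⊆ BSet Gd := by
      rintro x ⟨β, ⟨⟨hb, he, hne, hz⟩, hv0⟩, rfl⟩
      refine ⟨fun x => hb _, fun x y hxy => he _ _ hxy, ?_, ?_⟩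
      · intro h
        apply hne
        funext u
        by_cases huv : u = v
        · rw [huv, hv0]; rfl
        · exact congrFun h ⟨u, huv⟩
      · intro x hx
        obtain ⟨w, hadj, hw0⟩ := hz ↑x hx
        have hwv : w ≠ v := fun h => hw0 (h ▸ hv0)
        exact ⟨⟨w, hwv⟩, hadj, hw0⟩
    calc P0.ncard = (res '' P0).ncard := (Set.ncard_image_of_injOn hinj).symm
      _ ≤ (BSet Gd).ncard := Set.ncard_le_ncard himg (BSet_finite Gd)
  -- (B) bad parts inject into BSet Gn
  have hBmem : ∀ ε : ℤ, ∀ β ∈ BSet G, β v = ε → ε ≠ 0 → (∀ w, G.Adj v w → β w = 0) →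
      resn β ∈ BSet Gn := by
    rintro ε β ⟨hb, he, hne, hz⟩ hvε hε hall
    have hns : ∀ w : V, ¬(w = v ∨ G.Adj v w) → (β w = 0 →
        ∃ w', (¬(w' = v ∨ G.Adj v w')) ∧ G.Adj w w' ∧ β w' ≠ 0) := by
      intro w hw hw0
      push_neg at hw
      obtain ⟨w', hadj, hw'0⟩ := hz w hw0
      have hw'v : w' ≠ v := by
        intro h
        rw [h] at hadj
        exact hw.2 hadj.symm
      have hw'n : ¬ G.Adj v w' := by
        intro h
        exact hw'0 (hall w' h)
      exact ⟨w', by push_neg; exact ⟨hw'v, hw'n⟩, hadj, hw'0⟩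
    refine ⟨fun x => hb _, fun x y hxy => he _ _ hxy, ?_, ?_⟩
    · intro h
      have hu₀0 : β u₀ = 0 := by
        have := congrFun h ⟨u₀, by rw [Set.mem_setOf_eq]; push_neg; exact hu₀⟩
        simpa using this
      obtain ⟨w', hw', hadj, hw'0⟩ := hns u₀ (by push_neg; exact hu₀) hu₀0
      have : β w' = 0 := by
        have := congrFun h ⟨w', by rw [Set.mem_setOf_eq]; exact hw'⟩
        simpa using this
      exact hw'0 this
    · intro x hx
      obtain ⟨w', hw', hadj, hw'0⟩ := hns ↑x x.2 hx
      exact ⟨⟨w', hw'⟩, hadj, hw'0⟩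
  have hBinj : ∀ ε : ℤ, Set.InjOn resn {β ∈ BSet G | β v = ε ∧ ∀ w, G.Adj v w → β w = 0} := by
    intro ε a ha b hb hab
    funext u
    by_cases h : u = v
    · rw [h, ha.2.1, hb.2.1]
    · by_cases h2 : G.Adj v u
      · rw [ha.2.2 u h2, hb.2.2 u h2]
      · exact congrFun hab ⟨u, by rw [Set.mem_setOf_eq]; push_neg; exact ⟨h, h2⟩⟩
  have hB1 : Ppb.ncard ≤ (BSet Gn).ncard := by
    have himg : resn '' Ppb ⊆ BSet Gn := by
      rintro x ⟨β, ⟨hβ, hv1, hall⟩, rfl⟩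
      exact hBmem 1 β hβ hv1 one_ne_zero hall
    calc Ppb.ncard = (resn '' Ppb).ncard := (Set.ncard_image_of_injOn (hBinj 1)).symm
      _ ≤ (BSet Gn).ncard := Set.ncard_le_ncard himg (BSet_finite Gn)
  have hB2 : Pmb.ncard ≤ (BSet Gn).ncard := by
    have himg : resn '' Pmb ⊆ BSet Gn := by
      rintro x ⟨β, ⟨hβ, hv1, hall⟩, rfl⟩
      exact hBmem (-1) β hβ hv1 (by norm_num) hall
    calc Pmb.ncard = (resn '' Pmb).ncard := (Set.ncard_image_of_injOn (hBinj (-1))).symm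
      _ ≤ (BSet Gn).ncard := Set.ncard_le_ncard himg (BSet_finite Gn)
  -- (C) good parts inject into BSet Gc, with disjoint images
  have hCval : ∀ (ε : ℤ) (β : V → ℤ), β ∈ BSet G → β v = ε → ∀ c, G.Adj v c →
      ε - 1 ≤ β c ∧ β c ≤ ε + 1 := by
    rintro ε β ⟨hb, he, hne, hz⟩ hvε c hadj
    have h1 := abs_le.mp (he v c hadj)
    have h2 := abs_le.mp (hb c)
    omega
  have hCmem : ∀ (ε : ℤ) (β : V → ℤ), β ∈ BSet G → β v = ε → (ε = 1 ∨ ε = -1) →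
      (∃ w, G.Adj v w ∧ β w ≠ 0) → resc β ∈ BSet Gc := by
    rintro ε β hβ hvε hε ⟨w₀, hadj₀, hw₀⟩
    obtain ⟨hb, he, hne, hz⟩ := hβ
    have hw₀v : w₀ ≠ v := fun h => G.loopless.irrefl v (h ▸ hadj₀)
    have hw₀ε : β w₀ = ε := by
      have := hCval ε β ⟨hb, he, hne, hz⟩ hvε w₀ hadj₀
      have h2 := abs_le.mp (hb w₀)
      rcases hε with h | h <;> omega
    refine ⟨fun x => hb _, ?_, ?_, ?_⟩
    · rintro x y ⟨hxy, hG | ⟨h1, h2⟩⟩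
      · exact he _ _ hG
      · have e1 := hCval ε β ⟨hb, he, hne, hz⟩ hvε ↑x h1
        have e2 := hCval ε β ⟨hb, he, hne, hz⟩ hvε ↑y h2
        have e3 := abs_le.mp (hb ↑x)
        have e4 := abs_le.mp (hb ↑y)
        simp only [hresc]
        rw [abs_le]
        rcases hε with h | h <;> omega
    · intro h
      have := congrFun h ⟨w₀, hw₀v⟩
      simp only [hresc] at this
      rw [hw₀ε] at this
      simp only [Pi.zero_apply] at this
      rcases hε with h' | h' <;> (rw [h'] at this; norm_num at this)
    · intro x hx
      simp only [hresc] at hx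
      obtain ⟨w, hadj, hw0⟩ := hz ↑x hx
      by_cases hwv : w = v
      · -- x is adjacent to v; use w₀ instead
        have hxN : G.Adj v ↑x := by
          rw [hwv] at hadj
          exact hadj.symm
        have hxw₀ : (x : V) ≠ w₀ := by
          intro h
          rw [← h] at hw₀ε
          rw [hw₀ε] at hx
          rcases hε with h' | h' <;> (rw [h'] at hx; norm_num at hx)
        refine ⟨⟨w₀, hw₀v⟩, show _ ∧ _ from ⟨?_, Or.inr ⟨hxN, hadj₀⟩⟩, ?_⟩
        · intro h
          exact hxw₀ (congrArg Subtype.val h)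
        · rw [hresc]
          simp only
          rw [hw₀ε]
          rcases hε with h' | h' <;> (rw [h']; norm_num)
      · refine ⟨⟨w, hwv⟩, show _ ∧ _ from ⟨?_, Or.inl hadj⟩, hw0⟩
        intro h
        exact hadj.ne (congrArg Subtype.val h)
  have hCinj : ∀ ε : ℤ, Set.InjOn resc {β ∈ BSet G | β v = ε ∧ ∃ w, G.Adj v w ∧ β w ≠ 0} := by
    intro ε a ha b hb hab
    funext u
    by_cases h : u = v
    · rw [h, ha.2.1, hb.2.1]
    · exact congrFun hab ⟨u, h⟩
  have hCdisj : Disjoint (resc '' Ppg) (resc '' Pmg) := by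
    rw [Set.disjoint_left]
    rintro x ⟨β, ⟨hβ, hv1, w₀, hadj₀, hw₀⟩, rfl⟩ ⟨β₂, ⟨hβ₂, hv2, hwit₂⟩, hx⟩
    have hw₀v : w₀ ≠ v := fun h => G.loopless.irrefl v (h ▸ hadj₀)
    have hw₀1 : β w₀ = 1 := by
      have := hCval 1 β hβ hv1 w₀ hadj₀
      have h2 := abs_le.mp (hβ.1 w₀)
      omega
    have hβ₂w₀ : β₂ w₀ ≤ 0 := by
      have := hCval (-1) β₂ hβ₂ hv2 w₀ hadj₀
      omega
    have := congrFun hx ⟨w₀, hw₀v⟩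
    simp only [hresc] at this
    rw [hw₀1] at this
    omega
  have hC : Ppg.ncard + Pmg.ncard ≤ (BSet Gc).ncard := by
    have himg1 : resc '' Ppg ⊆ BSet Gc := by
      rintro x ⟨β, ⟨hβ, hv1, hwit⟩, rfl⟩
      exact hCmem 1 β hβ hv1 (Or.inl rfl) hwit
    have himg2 : resc '' Pmg ⊆ BSet Gc := by
      rintro x ⟨β, ⟨hβ, hv1, hwit⟩, rfl⟩
      exact hCmem (-1) β hβ hv1 (Or.inr rfl) hwit
    have hfc : (BSet Gc).Finite := BSet_finite Gc
    calc Ppg.ncard + Pmg.ncard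
        = (resc '' Ppg).ncard + (resc '' Pmg).ncard := by
          rw [Set.ncard_image_of_injOn (hCinj 1), Set.ncard_image_of_injOn (hCinj (-1))]
      _ = ((resc '' Ppg) ∪ (resc '' Pmg)).ncard :=
          (Set.ncard_union_eq hCdisj (hfc.subset himg1) (hfc.subset himg2)).symm
      _ ≤ (BSet Gc).ncard := Set.ncard_le_ncard (Set.union_subset himg1 himg2) hfc
  -- put everything together
  have htot : (BSet G).ncard ≤ P0.ncard + Ppb.ncard + Ppg.ncard + Pmb.ncard + Pmg.ncard := by
    calc (BSet G).ncard ≤ (P0 ∪ Ppb ∪ Ppg ∪ Pmb ∪ Pmg).ncard :=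
          Set.ncard_le_ncard hcover (((((hfin0.union hfinpb).union hfinpg).union
            hfinmb).union hfinmg))
      _ ≤ (P0 ∪ Ppb ∪ Ppg ∪ Pmb).ncard + Pmg.ncard := Set.ncard_union_le _ _
      _ ≤ (P0 ∪ Ppb ∪ Ppg).ncard + Pmb.ncard + Pmg.ncard := by
          have := Set.ncard_union_le (P0 ∪ Ppb ∪ Ppg) Pmb
          omega
      _ ≤ (P0 ∪ Ppb).ncard + Ppg.ncard + Pmb.ncard + Pmg.ncard := by
          have := Set.ncard_union_le (P0 ∪ Ppb) Ppg
          omega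
      _ ≤ P0.ncard + Ppb.ncard + Ppg.ncard + Pmb.ncard + Pmg.ncard := by
          have := Set.ncard_union_le P0 Ppb
          omega
  omega
end Upper

end SEPAux

open SEPAux in
/-- Let `G` be a graph on `[n-1]` with `n ≥ 3` and let `v` be a vertex
of `G` with `N_G[v] ≠ [n-1]`. Then
`N(P_{(G-v)^}) + N(P_{(G/v)^}) ≤ N(P_Ĝ) ≤ N(P_{(G-v)^}) + 2·N(P_{(G-N_G[v])^}) + N(P_{(G/v)^})`. -/
theorem numFacets_suspension_bounds {V : Type*} [Fintype V] [DecidableEq V]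
    (G : SimpleGraph V) (hn : 3 ≤ Fintype.card V + 1) (v : V)
    (hNv : {u : V | u = v ∨ G.Adj v u} ≠ Set.univ) :
    numFacets (symEdgePolytope (suspension (G.induce {u : V | u ≠ v}))) +
        numFacets (symEdgePolytope (suspension (contractVertex G v))) ≤
      numFacets (symEdgePolytope (suspension G)) ∧
    numFacets (symEdgePolytope (suspension G)) ≤
      numFacets (symEdgePolytope (suspension (G.induce {u : V | u ≠ v}))) +
        2 * numFacets (symEdgePolytope
          (suspension (G.induce {u : V | ¬(u = v ∨ G.Adj v u)}))) +
        numFacets (symEdgePolytope (suspension (contractVertex G v))) := by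
  classical
  have hcard : 2 ≤ Fintype.card V := by omega
  haveI : Nonempty V := Fintype.card_pos_iff.mp (by omega)
  obtain ⟨u₁, hu₁⟩ := Fintype.exists_ne_of_one_lt_card (by omega) v
  haveI hne1 : Nonempty ↥{u : V | u ≠ v} := ⟨⟨u₁, hu₁⟩⟩
  haveI hne2 : Nonempty {u : V // u ≠ v} := ⟨⟨u₁, hu₁⟩⟩
  obtain ⟨u₀, hu₀⟩ := (Set.ne_univ_iff_exists_notMem _).mp hNv
  haveI hne3 : Nonempty ↥{u : V | ¬(u = v ∨ G.Adj v u)} := ⟨⟨u₀, hu₀⟩⟩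
  haveI : Fintype ↥{u : V | ¬(u = v ∨ G.Adj v u)} := Fintype.ofFinite _
  rw [numFacets_suspension (G.induce {u : V | u ≠ v}),
    numFacets_suspension (contractVertex G v),
    numFacets_suspension G,
    numFacets_suspension (G.induce {u : V | ¬(u = v ∨ G.Adj v u)})]
  exact ⟨lower_bound G v trivial, upper_bound G v hNv⟩
end
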